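/- arXiv:2312.07990 — 10 statements merged into one kernel-verified Lean document; each statement's English description precedes it below -/
import Mathlib

section
/- Suppose the step size is constant, α_k = α for all k, with 0 < α < 2/L. Then for every integer K ≥ 1, (1/K) ∑_{k=0}^{K−1} E[‖∇f(x_k)‖²] ≤ (2(f(x_0) − f⋆) / ((2 − Lα)α)) · (1/K) + (Lα / (2 − Lα)) · (σ²/b). -/
open MeasureTheory ProbabilityTheory Filter RealInnerProductSpace

section Aux

open intervalIntegral

lemma rsgd_inner_gradient {H : Type*} [NormedAddCommGroup H] [InnerProductSpace ℝ H]
    [CompleteSpace H] (f : H → ℝ) (z d : H) :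
    ⟪gradient f z, d⟫ = fderiv ℝ f z d := by
  rw [gradient, InnerProductSpace.toDual_symm_apply]

lemma rsgd_descent {H : Type*} [NormedAddCommGroup H] [InnerProductSpace ℝ H] [CompleteSpace H]
    (f : H → ℝ) (hf : ContDiff ℝ 1 f) (L : ℝ) (hL : 0 ≤ L)
    (hLip : LipschitzWith L.toNNReal (gradient f)) (x y : H) :
    f y ≤ f x + ⟪gradient f x, y - x⟫ + L / 2 * ‖y - x‖ ^ 2 := by
  set d := y - x with hd
  have hdiff : Differentiable ℝ f := hf.differentiable one_ne_zero
  set c : ℝ → H := fun t => x + t • d with hc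
  have hcont : Continuous c := by fun_prop
  have hgc : Continuous (gradient f) := hLip.continuous
  have hderiv : ∀ t : ℝ, HasDerivAt (fun s => f (c s)) ⟪gradient f (c t), d⟫ t := by
    intro t
    have h1 : HasDerivAt c d t := by
      rw [hc]; simpa only [one_smul, id] using ((hasDerivAt_id t).smul_const d).const_add x
    have h2 := ((hdiff (c t)).hasFDerivAt).comp_hasDerivAt t h1
    rw [rsgd_inner_gradient f]; exact h2
  have hcontphi : Continuous fun t : ℝ => ⟪gradient f (c t), d⟫ :=
    (hgc.comp hcont).inner continuous_const
  have hftc : f (c 1) - f (c 0) = ∫ t in (0:ℝ)..1, ⟪gradient f (c t), d⟫ :=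
    (integral_eq_sub_of_hasDerivAt (fun t _ => hderiv t)
      (hcontphi.intervalIntegrable 0 1)).symm
  have hc0 : c 0 = x := by simp [hc]
  have hc1 : c 1 = y := by simp [hc, hd]
  have hbound : (∫ t in (0:ℝ)..1, ⟪gradient f (c t), d⟫)
      ≤ ∫ t in (0:ℝ)..1, (⟪gradient f x, d⟫ + t * (L * ‖d‖ ^ 2)) := by
    apply integral_mono_on (by norm_num) (hcontphi.intervalIntegrable 0 1)
      (intervalIntegrable_const.add (intervalIntegrable_id.mul_const _))
    intro t ht
    rcases ht with ⟨ht0, ht1⟩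
    have : ⟪gradient f (c t), d⟫ = ⟪gradient f x, d⟫ + ⟪gradient f (c t) - gradient f x, d⟫ := by
      rw [inner_sub_left]; ring
    rw [this]
    have hstep : ⟪gradient f (c t) - gradient f x, d⟫ ≤ t * (L * ‖d‖ ^ 2) := by
      calc ⟪gradient f (c t) - gradient f x, d⟫ ≤ ‖gradient f (c t) - gradient f x‖ * ‖d‖ :=
          real_inner_le_norm _ _
      _ ≤ (L * ‖c t - x‖) * ‖d‖ := by
          have := hLip.dist_le_mul (c t) x
          rw [dist_eq_norm, dist_eq_norm] at this
          have hL' : (L.toNNReal : ℝ) = L := Real.coe_toNNReal _ hL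
          have h1 : ‖gradient f (c t) - gradient f x‖ ≤ L * ‖c t - x‖ := by
            calc ‖gradient f (c t) - gradient f x‖ ≤ (L.toNNReal : ℝ) * ‖c t - x‖ := this
              _ = L * ‖c t - x‖ := by rw [hL']
          exact mul_le_mul_of_nonneg_right h1 (norm_nonneg d)
      _ = t * (L * ‖d‖ ^ 2) := by
          have : c t - x = t • d := by simp [hc]
          rw [this, norm_smul, Real.norm_eq_abs, abs_of_nonneg ht0]
          ring
    linarith
  have hval : (∫ t in (0:ℝ)..1, (⟪gradient f x, d⟫ + t * (L * ‖d‖ ^ 2)))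
      = ⟪gradient f x, d⟫ + L / 2 * ‖d‖ ^ 2 := by
    rw [integral_add intervalIntegrable_const (intervalIntegrable_id.mul_const _),
      intervalIntegral.integral_const,
      intervalIntegral.integral_mul_const, integral_id]
    norm_num
    ring
  have := hftc.trans_le (hbound.trans_eq hval)
  rw [hc0, hc1] at this
  linarith

lemma rsgd_orth {Ω : Type*} {m : MeasurableSpace Ω} {m0 : MeasurableSpace Ω}
    (μ : Measure Ω) [IsProbabilityMeasure μ]
    {H : Type*} [NormedAddCommGroup H] [InnerProductSpace ℝ H] [CompleteSpace H]
    (hm : m ≤ m0)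
    {y e : Ω → H} (hy : StronglyMeasurable[m] y) (hy2 : MemLp y 2 μ) (he2 : MemLp e 2 μ)
    (he : condExp m μ e =ᵐ[μ] 0) :
    ∫ ω, ⟪y ω, e ω⟫ ∂μ = 0 := by
  have he_int : Integrable e μ := he2.integrable one_le_two
  set E : Lp H 2 μ := he2.toLp e with hE
  set Y : Lp H 2 μ := hy2.toLp y with hY
  have hYmeas : AEStronglyMeasurable[m] Y μ := ⟨y, hy, hy2.coeFn_toLp⟩
  have hzero : (condExpL2 H ℝ hm E : Ω → H) =ᵐ[μ] 0 := by
    refine Lp.ae_eq_zero_of_forall_setIntegral_eq_zero' (𝕜 := ℝ) hm _ (by norm_num) (by norm_num)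
      (fun s hs hμs => integrableOn_Lp_of_measure_ne_top _ (by norm_num) hμs.ne) ?_
      (aestronglyMeasurable_condExpL2 hm E)
    intro s hs hμs
    rw [integral_condExpL2_eq hm E hs hμs.ne]
    have h1 : ∫ ω in s, E ω ∂μ = ∫ ω in s, e ω ∂μ :=
      setIntegral_congr_ae (hm s hs) ((he2.coeFn_toLp).mono fun ω h _ => h)
    rw [h1, ← setIntegral_condExp hm he_int hs]
    refine (setIntegral_congr_ae (hm s hs) (he.mono fun ω h _ => h)).trans (by simp)
  have hinner : (inner ℝ E Y : ℝ) = 0 := by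
    rw [← inner_condExpL2_eq_inner_fun hm E Y hYmeas, L2.inner_def]
    have h0 : (fun ω => ⟪(condExpL2 H ℝ hm E : Ω → H) ω, Y ω⟫) =ᵐ[μ] fun _ => (0:ℝ) :=
      hzero.mono fun ω h => by simp only [h, Pi.zero_apply, inner_zero_left]
    rw [integral_congr_ae h0]
    simp
  have : ∫ ω, ⟪y ω, e ω⟫ ∂μ = (inner ℝ Y E : ℝ) := by
    rw [L2.inner_def]
    refine integral_congr_ae ?_
    filter_upwards [hy2.coeFn_toLp, he2.coeFn_toLp] with ω h1 h2
    rw [h1, h2]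
  rw [this, real_inner_comm, hinner]

lemma rsgd_integrable_inner {Ω : Type*} {m0 : MeasurableSpace Ω} {μ : Measure Ω}
    {H : Type*} [NormedAddCommGroup H] [InnerProductSpace ℝ H]
    {y e : Ω → H} (hy2 : MemLp y 2 μ) (he2 : MemLp e 2 μ) :
    Integrable (fun ω => ⟪y ω, e ω⟫) μ := by
  have := L2.integrable_inner (𝕜 := ℝ) (hy2.toLp y) (he2.toLp e)
  refine this.congr ?_
  filter_upwards [hy2.coeFn_toLp, he2.coeFn_toLp] with ω h1 h2
  rw [h1, h2]

end Aux

/-- Theorem 1 of the paper in the Euclidean/Hilbert setting: RSGD with a constant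
step size `α ∈ (0, 2/L)` under `L`-smoothness satisfies, for every `K ≥ 1`,
`(1/K) ∑_{k<K} E[‖∇f(x_k)‖²] ≤ 2(f(x₀) − f⋆)/((2 − Lα)α) · (1/K) + Lα/(2 − Lα) · σ²/b`. -/
theorem rsgd_constant_step_convergence
    {Ω : Type*} [MeasureSpace Ω] [IsProbabilityMeasure (ℙ : Measure Ω)]
    {H : Type*} [NormedAddCommGroup H] [InnerProductSpace ℝ H] [CompleteSpace H]
    (𝓕 : Filtration ℕ (inferInstance : MeasurableSpace Ω))
    (f : H → ℝ) (hf : ContDiff ℝ 1 f)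
    (L : ℝ) (hL : 0 < L) (hLip : LipschitzWith L.toNNReal (gradient f))
    (fstar : ℝ) (hbdd : ∀ y, fstar ≤ f y)
    (x₀ : H) (α : ℕ → ℝ) (hα : ∀ k, 0 < α k)
    (b : ℕ) (hb : 1 ≤ b) (σ2 : ℝ) (hσ2 : 0 ≤ σ2)
    (g : ℕ → Ω → H)
    (hg_meas : ∀ k, StronglyMeasurable[𝓕 (k + 1)] (g k))
    (hg_L2 : ∀ k, MemLp (g k) 2 ℙ)
    (x : ℕ → Ω → H)
    (hx0 : x 0 = fun _ => x₀)
    (hxrec : ∀ k, x (k + 1) = fun ω => x k ω - α k • g k ω)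
    (hx_meas : ∀ k, StronglyMeasurable[𝓕 k] (x k))
    (hg_mean : ∀ k, condExp (𝓕 k) ℙ (g k) =ᵐ[ℙ] fun ω => gradient f (x k ω))
    (hg_var : ∀ k, ∀ᵐ ω ∂ℙ,
      condExp (𝓕 k) ℙ (fun ω' => ‖g k ω' - gradient f (x k ω')‖ ^ 2) ω ≤ σ2 / b)
    (hx_int : ∀ k, Integrable (fun ω => ‖x k ω‖ ^ 2) ℙ)
    (hgrad_int : ∀ k, Integrable (fun ω => ‖gradient f (x k ω)‖ ^ 2) ℙ)
    (hf_int : ∀ k, Integrable (fun ω => f (x k ω)) ℙ)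
    (a : ℝ) (ha : 0 < a) (ha' : a < 2 / L) (hconst : ∀ k, α k = a) :
    ∀ K : ℕ, 1 ≤ K →
      (1 / (K : ℝ)) * ∑ k ∈ Finset.range K, ∫ ω, ‖gradient f (x k ω)‖ ^ 2 ∂ℙ
        ≤ 2 * (f x₀ - fstar) / ((2 - L * a) * a) * (1 / (K : ℝ))
          + L * a / (2 - L * a) * (σ2 / b) := by
  have hLa : L * a < 2 := by
    have := (lt_div_iff₀ hL).mp ha'
    linarith
  obtain ⟨q, hq_def⟩ : ∃ q : ℝ, q = σ2 / b := ⟨_, rfl⟩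
  simp only [← hq_def] at hg_var
  have hq : 0 ≤ q := hq_def ▸ div_nonneg hσ2 (Nat.cast_nonneg b)
  have hA : (0:ℝ) < 2 - L * a := by linarith
  obtain ⟨C, hC_def⟩ : ∃ C : ℝ, C = a - L * a ^ 2 / 2 := ⟨_, rfl⟩
  have hC : 0 < C := by rw [hC_def]; nlinarith [mul_pos ha hA]
  obtain ⟨D, hD_def⟩ : ∃ D : ℝ, D = L * a ^ 2 / 2 * q := ⟨_, rfl⟩
  have hD : 0 ≤ D := by rw [hD_def, hq_def]; positivity
  obtain ⟨I, hI_def⟩ : ∃ I : ℕ → ℝ, I = fun k => ∫ ω, ‖gradient f (x k ω)‖ ^ 2 ∂ℙ := ⟨_, rfl⟩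
  have hI_nonneg : ∀ k, 0 ≤ I k := fun k => by
    rw [hI_def]; exact integral_nonneg fun ω => by positivity
  -- per-step inequality
  have step : ∀ k, (∫ ω, f (x (k + 1) ω) ∂ℙ) ≤ (∫ ω, f (x k ω) ∂ℙ) - C * I k + D := by
    intro k
    have hmk : 𝓕 k ≤ (inferInstance : MeasurableSpace Ω) := 𝓕.le k
    have hy_sm : StronglyMeasurable[𝓕 k] (fun ω => gradient f (x k ω)) :=
      hLip.continuous.comp_stronglyMeasurable (hx_meas k)
    have hy_asm : AEStronglyMeasurable (fun ω => gradient f (x k ω)) ℙ :=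
      (hy_sm.mono hmk).aestronglyMeasurable
    have hy2 : MemLp (fun ω => gradient f (x k ω)) 2 ℙ :=
      (memLp_two_iff_integrable_sq_norm hy_asm).mpr (hgrad_int k)
    have he2 : MemLp (fun ω => g k ω - gradient f (x k ω)) 2 ℙ := (hg_L2 k).sub hy2
    have hy_int : Integrable (fun ω => gradient f (x k ω)) ℙ := hy2.integrable one_le_two
    have hgk_int : Integrable (g k) ℙ := (hg_L2 k).integrable one_le_two
    have hcond0 : condExp (𝓕 k) ℙ (fun ω => g k ω - gradient f (x k ω)) =ᵐ[ℙ] 0 := by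
      have heq : (fun ω => g k ω - gradient f (x k ω))
          = g k - (fun ω => gradient f (x k ω)) := rfl
      rw [heq]
      have h1 := condExp_sub (μ := ℙ) (m := 𝓕 k) hgk_int hy_int
      have h2 : condExp (𝓕 k) ℙ (fun ω => gradient f (x k ω))
          = fun ω => gradient f (x k ω) :=
        condExp_of_stronglyMeasurable hmk hy_sm hy_int
      filter_upwards [h1, hg_mean k] with ω hω h3
      rw [hω, Pi.sub_apply, h3, h2, Pi.zero_apply, sub_self]
    have horth : ∫ ω, ⟪gradient f (x k ω), g k ω - gradient f (x k ω)⟫ ∂ℙ = 0 :=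
      rsgd_orth ℙ hmk hy_sm hy2 he2 hcond0
    have he_asm : AEStronglyMeasurable (fun ω => g k ω - gradient f (x k ω)) ℙ :=
      (hg_L2 k).aestronglyMeasurable.sub hy_asm
    have he_sq_int : Integrable (fun ω => ‖g k ω - gradient f (x k ω)‖ ^ 2) ℙ :=
      (memLp_two_iff_integrable_sq_norm he_asm).mp he2
    have hvar : ∫ ω, ‖g k ω - gradient f (x k ω)‖ ^ 2 ∂ℙ ≤ q := by
      have hic := integral_condExp (μ := ℙ) (m := 𝓕 k)
        (f := fun ω => ‖g k ω - gradient f (x k ω)‖ ^ 2) hmk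
      rw [← hic]
      calc ∫ ω, (condExp (𝓕 k) ℙ (fun ω' => ‖g k ω' - gradient f (x k ω')‖ ^ 2)) ω ∂ℙ
          ≤ ∫ _, q ∂ℙ := integral_mono_ae integrable_condExp (integrable_const _) (hg_var k)
        _ = q := by simp
    have hinner_int : Integrable (fun ω => ⟪gradient f (x k ω), g k ω - gradient f (x k ω)⟫) ℙ :=
      rsgd_integrable_inner hy2 he2
    -- pointwise descent inequality
    have hpt : ∀ ω, f (x (k + 1) ω)
        ≤ f (x k ω) - C * ‖gradient f (x k ω)‖ ^ 2
          + (L * a ^ 2 - a) * ⟪gradient f (x k ω), g k ω - gradient f (x k ω)⟫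
          + L * a ^ 2 / 2 * ‖g k ω - gradient f (x k ω)‖ ^ 2 := by
      intro ω
      have hd := rsgd_descent f hf L hL.le hLip (x k ω) (x (k + 1) ω)
      have hdiffpt : x (k + 1) ω - x k ω = -(a • g k ω) := by
        rw [hxrec k, hconst k]; exact sub_sub_cancel_left _ _
      rw [hdiffpt] at hd
      have h1 : ⟪gradient f (x k ω), -(a • g k ω)⟫
          = -(a * ⟪gradient f (x k ω), g k ω⟫) := by
        rw [inner_neg_right, real_inner_smul_right]
      have h2 : ‖-(a • g k ω)‖ ^ 2 = a ^ 2 * ‖g k ω‖ ^ 2 := by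
        rw [norm_neg, norm_smul, Real.norm_eq_abs, abs_of_pos ha, mul_pow]
      have h3 : g k ω = gradient f (x k ω) + (g k ω - gradient f (x k ω)) := by abel
      have h4 : ⟪gradient f (x k ω), g k ω⟫
          = ‖gradient f (x k ω)‖ ^ 2
            + ⟪gradient f (x k ω), g k ω - gradient f (x k ω)⟫ := by
        nth_rewrite 1 [h3]
        rw [inner_add_right, real_inner_self_eq_norm_sq]
      have h5 : ‖g k ω‖ ^ 2 = ‖gradient f (x k ω)‖ ^ 2
          + 2 * ⟪gradient f (x k ω), g k ω - gradient f (x k ω)⟫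
          + ‖g k ω - gradient f (x k ω)‖ ^ 2 := by
        nth_rewrite 1 [h3]
        rw [norm_add_sq_real]
      rw [h1, h2] at hd
      rw [h4] at hd
      rw [h5] at hd
      rw [hC_def]
      nlinarith [hd]
    -- integrate
    have hint1 : Integrable (fun ω => f (x k ω) - C * ‖gradient f (x k ω)‖ ^ 2) ℙ :=
      (hf_int k).sub ((hgrad_int k).const_mul _)
    have hint2 : Integrable (fun ω => f (x k ω) - C * ‖gradient f (x k ω)‖ ^ 2
        + (L * a ^ 2 - a) * ⟪gradient f (x k ω), g k ω - gradient f (x k ω)⟫) ℙ :=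
      hint1.add (hinner_int.const_mul _)
    have hint3 : Integrable
        (fun ω => (L * a ^ 2 - a) * ⟪gradient f (x k ω), g k ω - gradient f (x k ω)⟫) ℙ :=
      hinner_int.const_mul _
    have hint4 : Integrable (fun ω => L * a ^ 2 / 2 * ‖g k ω - gradient f (x k ω)‖ ^ 2) ℙ :=
      he_sq_int.const_mul _
    have hint0 : Integrable (fun ω => C * ‖gradient f (x k ω)‖ ^ 2) ℙ :=
      (hgrad_int k).const_mul _
    have hRHS_int : Integrable (fun ω => f (x k ω) - C * ‖gradient f (x k ω)‖ ^ 2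
        + (L * a ^ 2 - a) * ⟪gradient f (x k ω), g k ω - gradient f (x k ω)⟫
        + L * a ^ 2 / 2 * ‖g k ω - gradient f (x k ω)‖ ^ 2) ℙ := hint2.add hint4
    have hmono := integral_mono (hf_int (k + 1)) hRHS_int (fun ω => hpt ω)
    rw [integral_add hint2 hint4, integral_add hint1 hint3,
      integral_sub (hf_int k) hint0,
      integral_const_mul, integral_const_mul, integral_const_mul, horth] at hmono
    simp only [mul_zero, add_zero] at hmono
    have hlast : L * a ^ 2 / 2 * (∫ ω, ‖g k ω - gradient f (x k ω)‖ ^ 2 ∂ℙ) ≤ D := by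
      rw [hD_def]
      have hcoef : (0:ℝ) ≤ L * a ^ 2 / 2 := by positivity
      exact mul_le_mul_of_nonneg_left hvar hcoef
    rw [hI_def]
    linarith [hmono, hlast]
  -- summed inequality
  have main : ∀ n : ℕ, (∫ ω, f (x n ω) ∂ℙ) + C * ∑ k ∈ Finset.range n, I k
      ≤ (∫ ω, f (x 0 ω) ∂ℙ) + n * D := by
    intro n
    induction n with
    | zero => simp
    | succ n ih =>
      rw [Finset.sum_range_succ]
      have := step n
      push_cast
      nlinarith [this, ih]
  have hf0 : (∫ ω, f (x 0 ω) ∂ℙ) = f x₀ := by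
    rw [hx0]; simp
  intro K hK
  have hsum_eq : ∑ k ∈ Finset.range K, (∫ ω, ‖gradient f (x k ω)‖ ^ 2 ∂ℙ)
      = ∑ k ∈ Finset.range K, I k :=
    Finset.sum_congr rfl fun k _ => by rw [hI_def]
  rw [hsum_eq]
  have hKpos : (0 : ℝ) < K := by exact_mod_cast hK
  have hfK : fstar ≤ ∫ ω, f (x K ω) ∂ℙ := by
    calc fstar = ∫ _, fstar ∂ℙ := by simp
      _ ≤ ∫ ω, f (x K ω) ∂ℙ := integral_mono (integrable_const _) (hf_int K) fun ω => hbdd _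
  have hsum : C * ∑ k ∈ Finset.range K, I k ≤ (f x₀ - fstar) + K * D := by
    have := main K
    rw [hf0] at this
    linarith
  -- final algebra
  have hA : 0 < 2 - L * a := by linarith
  have hSnn : 0 ≤ ∑ k ∈ Finset.range K, I k :=
    Finset.sum_nonneg fun k _ => hI_nonneg k
  have hF : 0 ≤ f x₀ - fstar := by have := hbdd x₀; linarith
  rw [← mul_le_mul_iff_of_pos_left hC]
  have lhs_eq : C * (1 / (K:ℝ) * ∑ k ∈ Finset.range K, I k)
      = 1 / (K:ℝ) * (C * ∑ k ∈ Finset.range K, I k) := by ring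
  rw [lhs_eq]
  have h1 : 1 / (K:ℝ) * (C * ∑ k ∈ Finset.range K, I k)
      ≤ 1 / (K:ℝ) * ((f x₀ - fstar) + K * D) := by
    apply mul_le_mul_of_nonneg_left hsum
    positivity
  refine h1.trans_eq ?_
  rw [hC_def, hD_def, hq_def]
  field_simp
end

section
/- Suppose the step sizes satisfy ∑_{k=0}^{∞} α_k = +∞ and ∑_{k=0}^{∞} α_k² < +∞. Then liminf_{k→∞} E[‖∇f(x_k)‖] = 0. -/
open MeasureTheory ProbabilityTheory Filter RealInnerProductSpace
open Topology

lemma descent_lemma {H : Type*} [NormedAddCommGroup H] [InnerProductSpace ℝ H] [CompleteSpace H]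
    {f : H → ℝ} (hf : ContDiff ℝ 1 f) {L : ℝ} (hL : 0 ≤ L)
    (hLip : LipschitzWith L.toNNReal (gradient f)) (x y : H) :
    f y ≤ f x + ⟪gradient f x, y - x⟫ + L / 2 * ‖y - x‖ ^ 2 := by
  set v := y - x with hv
  have hdiff := hf.differentiable one_ne_zero
  have hderiv : ∀ t : ℝ, HasDerivAt (fun t : ℝ => f (x + t • v))
      ⟪gradient f (x + t • v), v⟫ t := by
    intro t
    have hc : HasDerivAt (fun t : ℝ => x + t • v) v t := by
      simpa using ((hasDerivAt_id t).smul_const v).const_add x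
    have hg : HasGradientAt f (gradient f (x + t • v)) (x + t • v) :=
      (hdiff (x + t • v)).hasGradientAt
    have hF := hasGradientAt_iff_hasFDerivAt.mp hg
    have := hF.comp_hasDerivAt t hc
    have h2 : HasDerivAt (fun t : ℝ => f (x + t • v))
        ((InnerProductSpace.toDual ℝ H (gradient f (x + t • v))) v) t := this
    rwa [InnerProductSpace.toDual_apply_apply] at h2
  have hcont : Continuous fun t : ℝ => ⟪gradient f (x + t • v), v⟫ := by
    exact (continuous_inner.comp
      (((hLip.continuous.comp ((continuous_const.add (continuous_id.smul continuous_const))))).prodMk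
      continuous_const))
  have hFTC : f (x + (1:ℝ) • v) - f (x + (0:ℝ) • v)
      = ∫ t in (0:ℝ)..1, ⟪gradient f (x + t • v), v⟫ := by
    refine (intervalIntegral.integral_eq_sub_of_hasDerivAt (fun t _ => hderiv t) ?_).symm
    exact (hcont.intervalIntegrable 0 1)
  have hbound : ∫ t in (0:ℝ)..1, ⟪gradient f (x + t • v), v⟫
      ≤ ∫ t in (0:ℝ)..1, (⟪gradient f x, v⟫ + (L * ‖v‖ ^ 2) * t) := by
    refine intervalIntegral.integral_mono_on (by norm_num) (hcont.intervalIntegrable 0 1)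
      ((continuous_const.add (continuous_const.mul continuous_id')).intervalIntegrable 0 1) ?_
    intro t ht
    rcases ht with ⟨ht0, _⟩
    have key : ⟪gradient f (x + t • v) - gradient f x, v⟫ ≤ L * t * ‖v‖ ^ 2 := by
      calc ⟪gradient f (x + t • v) - gradient f x, v⟫
          ≤ ‖gradient f (x + t • v) - gradient f x‖ * ‖v‖ := real_inner_le_norm _ _
        _ ≤ (L * (t * ‖v‖)) * ‖v‖ := by
            have := hLip.dist_le_mul (x + t • v) x
            rw [dist_eq_norm] at this
            simp only [dist_eq_norm, add_sub_cancel_left] at this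
            have hnorm : ‖t • v‖ = t * ‖v‖ := by
              rw [norm_smul, Real.norm_eq_abs, abs_of_nonneg ht0]
            rw [hnorm] at this
            have : ‖gradient f (x + t • v) - gradient f x‖ ≤ L * (t * ‖v‖) := by
              simpa [dist_eq_norm, Real.coe_toNNReal L hL] using this
            exact mul_le_mul_of_nonneg_right this (norm_nonneg v)
        _ = L * t * ‖v‖ ^ 2 := by ring
    have expand : ⟪gradient f (x + t • v), v⟫
        = ⟪gradient f x, v⟫ + ⟪gradient f (x + t • v) - gradient f x, v⟫ := by
      have h : gradient f x + (gradient f (x + t • v) - gradient f x)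
          = gradient f (x + t • v) := by abel
      rw [← inner_add_left, h]
    rw [expand]
    nlinarith [key]
  have hrhs : ∫ t in (0:ℝ)..1, (⟪gradient f x, v⟫ + (L * ‖v‖ ^ 2) * t)
      = ⟪gradient f x, v⟫ + L / 2 * ‖v‖ ^ 2 := by
    rw [intervalIntegral.integral_add (g := fun t : ℝ => L * ‖v‖ ^ 2 * t) (intervalIntegrable_const)
      ((continuous_const.mul continuous_id').intervalIntegrable 0 1),
      intervalIntegral.integral_const_mul, integral_id,
      intervalIntegral.integral_const]
    simp; ring
  have h1 : x + (1:ℝ) • v = y := by simp [hv]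
  have h0 : x + (0:ℝ) • v = x := by simp
  rw [h1, h0] at hFTC
  linarith [hFTC, hbound.trans_eq hrhs]

section Bridge

variable {Ω : Type*} {m m0 : MeasurableSpace Ω} {μ : Measure Ω} [IsFiniteMeasure μ]
  {E : Type*} [NormedAddCommGroup E] [InnerProductSpace ℝ E] [CompleteSpace E]

lemma condexpL2_toLp_ae_eq_condexp (hm : m ≤ m0) {g : Ω → E} (hg : MemLp g 2 μ) :
    ((condExpL2 E ℝ hm (hg.toLp g) : Ω →₂[μ] E) : Ω → E) =ᵐ[μ] μ[g | m] := by
  haveI : SigmaFinite (μ.trim hm) := by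
    have : IsFiniteMeasure (μ.trim hm) := isFiniteMeasure_trim hm
    infer_instance
  refine ae_eq_condExp_of_forall_setIntegral_eq hm (hg.integrable one_le_two)
    (fun s hs hμs => (integrable_condExpL2_of_isFiniteMeasure hm).integrableOn)
    (fun s hs hμs => ?_) (aestronglyMeasurable_condExpL2 hm _)
  rw [integral_condExpL2_eq hm (hg.toLp g) hs hμs.ne]
  exact setIntegral_congr_ae (hm s hs) ((hg.coeFn_toLp).mono fun ω hω _ => hω)

lemma integral_inner_eq_of_condexp [IsProbabilityMeasure μ] (hm : m ≤ m0)
    {g h : Ω → E} (hg : MemLp g 2 μ) (hh : MemLp h 2 μ)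
    (hhm : AEStronglyMeasurable[m] h μ) (hmean : μ[g | m] =ᵐ[μ] h) :
    ∫ ω, ⟪h ω, g ω⟫ ∂μ = ∫ ω, ⟪h ω, h ω⟫ ∂μ := by
  set G := hg.toLp g with hG
  set Hh := hh.toLp h with hHh
  have hGae : (G : Ω → E) =ᵐ[μ] g := hg.coeFn_toLp
  have hHae : (Hh : Ω → E) =ᵐ[μ] h := hh.coeFn_toLp
  have hCae : ((condExpL2 E ℝ hm G : Ω →₂[μ] E) : Ω → E) =ᵐ[μ] h :=
    (condexpL2_toLp_ae_eq_condexp hm hg).trans hmean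
  have e1 : ∫ ω, ⟪h ω, g ω⟫ ∂μ = ⟪Hh, G⟫ := by
    rw [MeasureTheory.L2.inner_def]
    refine integral_congr_ae ?_
    filter_upwards [hGae, hHae] with ω h1 h2
    rw [h1, h2]
  have e2 : ⟪Hh, G⟫ = ⟪(condExpL2 E ℝ hm G : Ω →₂[μ] E), Hh⟫ := by
    rw [real_inner_comm]
    exact (inner_condExpL2_eq_inner_fun hm G Hh (hhm.congr hHae.symm)).symm
  have e3 : ⟪(condExpL2 E ℝ hm G : Ω →₂[μ] E), Hh⟫ = ∫ ω, ⟪h ω, h ω⟫ ∂μ := by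
    rw [MeasureTheory.L2.inner_def]
    refine integral_congr_ae ?_
    filter_upwards [hCae, hHae] with ω h1 h2
    rw [h1, h2]
  rw [e1, e2, e3]

end Bridge


lemma integrable_inner_of_memL2 {Ω : Type*} {m0 : MeasurableSpace Ω} {μ : Measure Ω}
    {E : Type*} [NormedAddCommGroup E] [InnerProductSpace ℝ E]
    {g h : Ω → E} (hg : MemLp g 2 μ) (hh : MemLp h 2 μ) :
    Integrable (fun ω => ⟪h ω, g ω⟫) μ := by
  refine (MeasureTheory.L2.integrable_inner (𝕜 := ℝ) (hh.toLp h) (hg.toLp g)).congr ?_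
  filter_upwards [hg.coeFn_toLp, hh.coeFn_toLp] with ω h1 h2
  rw [h1, h2]

set_option maxHeartbeats 1000000 in
/-- Theorem 2 (first assertion) of the paper in the Euclidean/Hilbert setting:
RSGD with diminishing step sizes (`∑ α_k = ∞`, `∑ α_k² < ∞`) under `L`-smoothness
satisfies `liminf_{k→∞} E[‖∇f(x_k)‖] = 0`. -/
theorem rsgd_diminishing_step_liminf
    {Ω : Type*} [MeasureSpace Ω] [IsProbabilityMeasure (ℙ : Measure Ω)]
    {H : Type*} [NormedAddCommGroup H] [InnerProductSpace ℝ H] [CompleteSpace H]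
    (𝓕 : Filtration ℕ (inferInstance : MeasurableSpace Ω))
    (f : H → ℝ) (hf : ContDiff ℝ 1 f)
    (L : ℝ) (hL : 0 < L) (hLip : LipschitzWith L.toNNReal (gradient f))
    (fstar : ℝ) (hbdd : ∀ y, fstar ≤ f y)
    (x₀ : H) (α : ℕ → ℝ) (hα : ∀ k, 0 < α k)
    (b : ℕ) (hb : 1 ≤ b) (σ2 : ℝ) (hσ2 : 0 ≤ σ2)
    (g : ℕ → Ω → H)
    (hg_meas : ∀ k, StronglyMeasurable[𝓕 (k + 1)] (g k))
    (hg_L2 : ∀ k, MemLp (g k) 2 ℙ)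
    (x : ℕ → Ω → H)
    (hx0 : x 0 = fun _ => x₀)
    (hxrec : ∀ k, x (k + 1) = fun ω => x k ω - α k • g k ω)
    (hx_meas : ∀ k, StronglyMeasurable[𝓕 k] (x k))
    (hg_mean : ∀ k, condExp (𝓕 k) ℙ (g k) =ᵐ[ℙ] fun ω => gradient f (x k ω))
    (hg_var : ∀ k, ∀ᵐ ω ∂ℙ,
      condExp (𝓕 k) ℙ (fun ω' => ‖g k ω' - gradient f (x k ω')‖ ^ 2) ω ≤ σ2 / b)
    (hx_int : ∀ k, Integrable (fun ω => ‖x k ω‖ ^ 2) ℙ)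
    (hgrad_int : ∀ k, Integrable (fun ω => ‖gradient f (x k ω)‖ ^ 2) ℙ)
    (hf_int : ∀ k, Integrable (fun ω => f (x k ω)) ℙ)
    (hdiv : Tendsto (fun K => ∑ k ∈ Finset.range K, α k) atTop atTop)
    (hsum : Summable (fun k => α k ^ 2)) :
    liminf (fun k => ∫ ω, ‖gradient f (x k ω)‖ ∂ℙ) atTop = 0 := by
  classical
  set G : ℕ → ℝ := fun k => ∫ ω, ‖gradient f (x k ω)‖ ^ 2 ∂ℙ with hG_def
  set F : ℕ → ℝ := fun k => ∫ ω, f (x k ω) ∂ℙ with hF_def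
  set EN : ℕ → ℝ := fun k => ∫ ω, ‖gradient f (x k ω)‖ ∂ℙ with hEN_def
  have hG_nonneg : ∀ k, 0 ≤ G k := fun k => integral_nonneg fun ω => by positivity
  have hEN_nonneg : ∀ k, 0 ≤ EN k := fun k => integral_nonneg fun ω => norm_nonneg _
  have hh_sm : ∀ k, StronglyMeasurable[𝓕 k] (fun ω => gradient f (x k ω)) := fun k =>
    hLip.continuous.comp_stronglyMeasurable (hx_meas k)
  have hh_sm0 : ∀ k, StronglyMeasurable (fun ω => gradient f (x k ω)) := fun k =>
    (hh_sm k).mono (𝓕.le k)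
  have hh_L2 : ∀ k, MemLp (fun ω => gradient f (x k ω)) 2 ℙ := fun k =>
    (memLp_two_iff_integrable_sq_norm (hh_sm0 k).aestronglyMeasurable).mpr (hgrad_int k)
  have hinner_int : ∀ k, Integrable (fun ω => ⟪gradient f (x k ω), g k ω⟫) ℙ := fun k =>
    integrable_inner_of_memL2 (hg_L2 k) (hh_L2 k)
  have hGint : ∀ k, ∫ ω, ⟪gradient f (x k ω), gradient f (x k ω)⟫ ∂ℙ = G k := by
    intro k
    refine integral_congr_ae (Eventually.of_forall fun ω => ?_)
    simp [real_inner_self_eq_norm_sq]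
  have hinner : ∀ k, ∫ ω, ⟪gradient f (x k ω), g k ω⟫ ∂ℙ = G k := by
    intro k
    rw [← hGint k]
    exact integral_inner_eq_of_condexp (𝓕.le k) (hg_L2 k) (hh_L2 k)
      ((hh_sm k).aestronglyMeasurable) (hg_mean k)
  have hgh_L2 : ∀ k, MemLp (fun ω => g k ω - gradient f (x k ω)) 2 ℙ := fun k =>
    (hg_L2 k).sub (hh_L2 k)
  have hgh_sq_int : ∀ k, Integrable (fun ω => ‖g k ω - gradient f (x k ω)‖ ^ 2) ℙ := fun k =>
    (memLp_two_iff_integrable_sq_norm (hgh_L2 k).aestronglyMeasurable).mp (hgh_L2 k)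
  have hgsq_int : ∀ k, Integrable (fun ω => ‖g k ω‖ ^ 2) ℙ := fun k =>
    (memLp_two_iff_integrable_sq_norm (hg_L2 k).aestronglyMeasurable).mp (hg_L2 k)
  -- variance bound
  have hvar : ∀ k, ∫ ω, ‖g k ω - gradient f (x k ω)‖ ^ 2 ∂ℙ ≤ σ2 / b := by
    intro k
    haveI : SigmaFinite ((ℙ : Measure Ω).trim (𝓕.le k)) := by
      have : IsFiniteMeasure ((ℙ : Measure Ω).trim (𝓕.le k)) := isFiniteMeasure_trim _
      infer_instance
    have h1 : ∫ ω, (condExp (𝓕 k) ℙ (fun ω' => ‖g k ω' - gradient f (x k ω')‖ ^ 2)) ω ∂ℙ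
        = ∫ ω, ‖g k ω - gradient f (x k ω)‖ ^ 2 ∂ℙ := integral_condExp (𝓕.le k)
    rw [← h1]
    calc ∫ ω, (condExp (𝓕 k) ℙ (fun ω' => ‖g k ω' - gradient f (x k ω')‖ ^ 2)) ω ∂ℙ
        ≤ ∫ _, σ2 / b ∂ℙ := integral_mono_ae integrable_condExp (integrable_const _) (hg_var k)
      _ = σ2 / b := by simp
  -- cross term vanishes
  have hcross_int : ∀ k, Integrable (fun ω => ⟪g k ω - gradient f (x k ω), gradient f (x k ω)⟫) ℙ := by
    intro k
    have := integrable_inner_of_memL2 (hh_L2 k) (hgh_L2 k)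
    exact this
  have hhh_int : ∀ k, Integrable (fun ω => ⟪gradient f (x k ω), gradient f (x k ω)⟫) ℙ := fun k =>
    integrable_inner_of_memL2 (hh_L2 k) (hh_L2 k)
  have hcross : ∀ k, ∫ ω, ⟪g k ω - gradient f (x k ω), gradient f (x k ω)⟫ ∂ℙ = 0 := by
    intro k
    have e : ∀ ω, ⟪g k ω - gradient f (x k ω), gradient f (x k ω)⟫
        = ⟪gradient f (x k ω), g k ω⟫ - ⟪gradient f (x k ω), gradient f (x k ω)⟫ := by
      intro ω
      rw [inner_sub_left, real_inner_comm (g k ω) (gradient f (x k ω))]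
    calc ∫ ω, ⟪g k ω - gradient f (x k ω), gradient f (x k ω)⟫ ∂ℙ
        = ∫ ω, (⟪gradient f (x k ω), g k ω⟫
            - ⟪gradient f (x k ω), gradient f (x k ω)⟫) ∂ℙ :=
          integral_congr_ae (Eventually.of_forall fun ω => e ω)
      _ = (∫ ω, ⟪gradient f (x k ω), g k ω⟫ ∂ℙ)
            - ∫ ω, ⟪gradient f (x k ω), gradient f (x k ω)⟫ ∂ℙ :=
          integral_sub (hinner_int k) (hhh_int k)
      _ = 0 := by rw [hinner k, hGint k, sub_self]
  -- second moment bound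
  have hgsq : ∀ k, ∫ ω, ‖g k ω‖ ^ 2 ∂ℙ ≤ G k + σ2 / b := by
    intro k
    have e : ∀ ω, ‖g k ω‖ ^ 2
        = ‖g k ω - gradient f (x k ω)‖ ^ 2
          + 2 * ⟪g k ω - gradient f (x k ω), gradient f (x k ω)⟫
          + ‖gradient f (x k ω)‖ ^ 2 := by
      intro ω
      have h0 : g k ω = (g k ω - gradient f (x k ω)) + gradient f (x k ω) := by abel
      calc ‖g k ω‖ ^ 2
          = ‖(g k ω - gradient f (x k ω)) + gradient f (x k ω)‖ ^ 2 := by rw [← h0]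
        _ = _ := norm_add_sq_real _ _
    have i2 : Integrable
        (fun ω => 2 * ⟪g k ω - gradient f (x k ω), gradient f (x k ω)⟫) ℙ :=
      (hcross_int k).const_mul 2
    have i12 : Integrable (fun ω => ‖g k ω - gradient f (x k ω)‖ ^ 2
        + 2 * ⟪g k ω - gradient f (x k ω), gradient f (x k ω)⟫) ℙ :=
      (hgh_sq_int k).add i2
    have hsplit : ∫ ω, ‖g k ω‖ ^ 2 ∂ℙ
        = (∫ ω, ‖g k ω - gradient f (x k ω)‖ ^ 2 ∂ℙ)
          + 2 * (∫ ω, ⟪g k ω - gradient f (x k ω), gradient f (x k ω)⟫ ∂ℙ) + G k := by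
      rw [integral_congr_ae (Eventually.of_forall e), integral_add i12 (hgrad_int k),
        integral_add (hgh_sq_int k) i2, integral_const_mul]
    rw [hsplit, hcross k]
    have := hvar k
    linarith
  -- one-step inequality
  have hstep : ∀ k, F (k + 1) ≤ F k - α k * G k + L / 2 * α k ^ 2 * (G k + σ2 / b) := by
    intro k
    have hpt : ∀ ω, f (x (k + 1) ω)
        ≤ f (x k ω) - α k * ⟪gradient f (x k ω), g k ω⟫
          + L / 2 * (α k ^ 2 * ‖g k ω‖ ^ 2) := by
      intro ω
      have hd := descent_lemma hf hL.le hLip (x k ω) (x (k + 1) ω)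
      have hxd : x (k + 1) ω - x k ω = -(α k • g k ω) := by
        rw [hxrec k]; exact sub_sub_cancel_left _ _
      rw [hxd] at hd
      have h1 : ⟪gradient f (x k ω), -(α k • g k ω)⟫
          = -(α k * ⟪gradient f (x k ω), g k ω⟫) := by
        rw [inner_neg_right, real_inner_smul_right]
      have h2 : ‖-(α k • g k ω)‖ ^ 2 = α k ^ 2 * ‖g k ω‖ ^ 2 := by
        rw [norm_neg, norm_smul, Real.norm_eq_abs, mul_pow, sq_abs]
      rw [h1, h2] at hd
      linarith
    have i1 : Integrable (fun ω => f (x k ω) - α k * ⟪gradient f (x k ω), g k ω⟫) ℙ :=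
      (hf_int k).sub ((hinner_int k).const_mul _)
    have i3 : Integrable (fun ω => α k ^ 2 * ‖g k ω‖ ^ 2) ℙ := (hgsq_int k).const_mul _
    have i4 : Integrable (fun ω => L / 2 * (α k ^ 2 * ‖g k ω‖ ^ 2)) ℙ := i3.const_mul _
    have hrhs_int : Integrable (fun ω => f (x k ω) - α k * ⟪gradient f (x k ω), g k ω⟫
        + L / 2 * (α k ^ 2 * ‖g k ω‖ ^ 2)) ℙ := i1.add i4
    have hmono := integral_mono (hf_int (k + 1)) hrhs_int hpt
    have hcalc : ∫ ω, (f (x k ω) - α k * ⟪gradient f (x k ω), g k ω⟫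
          + L / 2 * (α k ^ 2 * ‖g k ω‖ ^ 2)) ∂ℙ
        = F k - α k * G k + L / 2 * α k ^ 2 * ∫ ω, ‖g k ω‖ ^ 2 ∂ℙ := by
      rw [integral_add i1 i4, integral_sub (hf_int k) ((hinner_int k).const_mul _),
        integral_const_mul, integral_const_mul, integral_const_mul, hinner k]
      ring
    rw [hcalc] at hmono
    have hLα : 0 ≤ L / 2 * α k ^ 2 := by positivity
    have := mul_le_mul_of_nonneg_left (hgsq k) hLα
    have hmono2 : F (k + 1)
        ≤ F k - α k * G k + L / 2 * α k ^ 2 * ∫ ω, ‖g k ω‖ ^ 2 ∂ℙ := hmono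
    nlinarith [hmono2, this]
  -- lower bound on F
  have hFlow : ∀ k, fstar ≤ F k := by
    intro k
    have : ∫ (_ : Ω), fstar ∂ℙ ≤ F k :=
      integral_mono (integrable_const _) (hf_int k) fun ω => hbdd _
    simpa using this
  -- α tends to zero
  have hα0 : Tendsto α atTop (𝓝 0) := by
    have h2 := hsum.tendsto_atTop_zero
    have h3 : Tendsto (fun k => Real.sqrt (α k ^ 2)) atTop (𝓝 (Real.sqrt 0)) :=
      (Real.continuous_sqrt.tendsto 0).comp h2
    simp only [Real.sqrt_zero] at h3
    refine h3.congr fun k => ?_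
    rw [Real.sqrt_sq (hα k).le]
  obtain ⟨N, hN⟩ : ∃ N, ∀ k ≥ N, α k * L ≤ 1 := by
    have := hα0.eventually_lt_const (show (0:ℝ) < 1 / L by positivity)
    obtain ⟨N, hN⟩ := eventually_atTop.mp this
    exact ⟨N, fun k hk => ((lt_div_iff₀ hL).mp (hN k hk)).le⟩
  set c : ℝ := L / 2 * (σ2 / b) with hc_def
  have hc : 0 ≤ c := by positivity
  have hstep2 : ∀ k, N ≤ k → F (k + 1) ≤ F k - α k / 2 * G k + c * α k ^ 2 := by
    intro k hk
    have h1 := hstep k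
    have h2 : L / 2 * α k ^ 2 * G k ≤ α k / 2 * G k := by
      nlinarith [mul_nonneg (mul_nonneg (hα k).le (hG_nonneg k))
        (sub_nonneg.mpr (hN k hk)), hG_nonneg k, (hα k).le]
    nlinarith [h1, h2]
  set T : ℝ := ∑' k, α k ^ 2 with hT_def
  have hT_tail : ∀ K : ℕ, ∑ n ∈ Finset.range K, α (N + n) ^ 2 ≤ T := by
    intro K
    have hs' : Summable fun n => α (n + N) ^ 2 := (summable_nat_add_iff N).mpr hsum
    have hs'' : Summable fun n => α (N + n) ^ 2 := hs'.congr fun n => by rw [add_comm]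
    have h1 : ∑ n ∈ Finset.range K, α (N + n) ^ 2 ≤ ∑' n, α (N + n) ^ 2 :=
      Summable.sum_le_tsum _ (fun i _ => sq_nonneg _) hs''
    have h3 : ∑' n, α (N + n) ^ 2 = ∑' n, α (n + N) ^ 2 :=
      tsum_congr fun n => by rw [add_comm]
    have h4 := hsum.sum_add_tsum_nat_add N
    have h5 : 0 ≤ ∑ i ∈ Finset.range N, α i ^ 2 :=
      Finset.sum_nonneg fun i _ => sq_nonneg _
    rw [h3] at h1
    rw [hT_def]
    linarith
  have htel : ∀ K : ℕ, F (N + K) + ∑ n ∈ Finset.range K, α (N + n) / 2 * G (N + n)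
      ≤ F N + c * ∑ n ∈ Finset.range K, α (N + n) ^ 2 := by
    intro K
    induction K with
    | zero => simp
    | succ K ih =>
      have h1 := hstep2 (N + K) (Nat.le_add_right N K)
      rw [Finset.sum_range_succ, Finset.sum_range_succ]
      have hNK : N + (K + 1) = N + K + 1 := by omega
      rw [hNK]
      linarith
  have hbound : ∀ K : ℕ, ∑ n ∈ Finset.range K, α (N + n) / 2 * G (N + n)
      ≤ F N - fstar + c * T := by
    intro K
    have h1 := htel K
    have h2 := hFlow (N + K)
    have h3 := mul_le_mul_of_nonneg_left (hT_tail K) hc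
    linarith
  have hsum_tail : Summable fun n => α (N + n) / 2 * G (N + n) :=
    summable_of_sum_range_le
      (fun n => mul_nonneg (div_nonneg (hα _).le (by norm_num)) (hG_nonneg _)) hbound
  have hsum_tail2 : Summable fun n => α (N + n) * G (N + n) :=
    (hsum_tail.mul_left 2).congr fun n => by ring
  have hsumαG : Summable fun k => α k * G k :=
    (summable_nat_add_iff N).mp (hsum_tail2.congr fun n => by rw [add_comm])
  -- Cauchy–Schwarz: (E‖∇f‖)² ≤ E‖∇f‖²
  have hEN2 : ∀ k, EN k ^ 2 ≤ G k := by
    intro k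
    have hX : MemLp (fun ω => ‖gradient f (x k ω)‖) 2 ℙ := (hh_L2 k).norm
    have hv := variance_nonneg (fun ω => ‖gradient f (x k ω)‖) ℙ
    rw [variance_eq_sub hX] at hv
    simp only [Pi.pow_apply] at hv
    have hGr : G k = ∫ ω, ‖gradient f (x k ω)‖ ^ 2 ∂ℙ := rfl
    have hENr : EN k = ∫ ω, ‖gradient f (x k ω)‖ ∂ℙ := rfl
    rw [hGr, hENr]
    linarith
  -- key frequency claim
  have K1 : ∀ ε : ℝ, 0 < ε → ∃ᶠ k in atTop, EN k ≤ ε := by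
    intro ε hε
    by_contra hcon
    rw [not_frequently] at hcon
    have hcon' : ∀ᶠ k in atTop, ε < EN k := hcon.mono fun k hk => lt_of_not_ge hk
    obtain ⟨M, hM⟩ := eventually_atTop.mp hcon'
    have hG_lb : ∀ k, M ≤ k → ε ^ 2 ≤ G k := by
      intro k hk
      have h1 := hM k hk
      have h2 : ε ^ 2 ≤ EN k ^ 2 := by nlinarith [hEN_nonneg k]
      linarith [hEN2 k]
    have hs1 : Summable fun n => α (n + M) * G (n + M) := (summable_nat_add_iff M).mpr hsumαG
    have hs2 : Summable fun n => α (n + M) * ε ^ 2 := by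
      refine Summable.of_nonneg_of_le (fun n => mul_nonneg (hα _).le (sq_nonneg _)) (fun n => ?_) hs1
      exact mul_le_mul_of_nonneg_left (hG_lb (n + M) (Nat.le_add_left M n)) (hα _).le
    have hs3 : Summable fun n => α (n + M) := by
      have h6 := hs2.mul_right ((ε ^ 2)⁻¹)
      refine h6.congr fun n => ?_
      field_simp
    have hs4 : Summable α := (summable_nat_add_iff M).mp hs3
    exact (not_summable_iff_tendsto_nat_atTop_of_nonneg
      (fun n => (hα n).le)).mpr hdiv hs4
  -- conclude
  rw [liminf_eq]
  have h0S : (0:ℝ) ∈ {a : ℝ | ∀ᶠ k in atTop, a ≤ EN k} :=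
    Eventually.of_forall fun k => hEN_nonneg k
  have hub : ∀ a ∈ {a : ℝ | ∀ᶠ k in atTop, a ≤ EN k}, a ≤ 0 := by
    intro a ha
    by_contra hcon
    push_neg at hcon
    have hfreq := K1 (a / 2) (by linarith)
    obtain ⟨k, hk1, hk2⟩ := (ha.and_frequently hfreq).exists
    linarith
  exact le_antisymm (csSup_le ⟨0, h0S⟩ hub) (le_csSup ⟨0, hub⟩ h0S)
end

section
/- Suppose the step sizes (α_k)_{k∈ℕ} ⊂ (0,1) form a monotone nonincreasing sequence and that α_{k₀} < 2/L for some index k₀. Then there exist constants C₁, C₂ > 0 (depending only on f, x_0, f⋆, L, σ², b and the sequence (α_k) up to index k₀) such that for every integer K ≥ 1, (1/K) ∑_{k=0}^{K−1} E[‖∇f(x_k)‖²] ≤ (C₁ + (C₂ σ² / b) ∑_{k=0}^{K−1} α_k²) · 1/(K α_{K−1}). -/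
open MeasureTheory ProbabilityTheory Filter RealInnerProductSpace

lemma rsgd_descent_lemma {H : Type*} [NormedAddCommGroup H] [InnerProductSpace ℝ H]
    [CompleteSpace H] (f : H → ℝ) (hf : ContDiff ℝ 1 f) {L : ℝ} (hL : 0 ≤ L)
    (hLip : LipschitzWith L.toNNReal (gradient f)) (x v : H) :
    f (x + v) ≤ f x + ⟪gradient f x, v⟫ + L / 2 * ‖v‖ ^ 2 := by
  have hdiff : ∀ y, DifferentiableAt ℝ f y := fun y => hf.differentiable one_ne_zero y
  have hgrad : ∀ y, HasFDerivAt f ((InnerProductSpace.toDual ℝ H) (gradient f y)) y := fun y =>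
    hasGradientAt_iff_hasFDerivAt.mp (hdiff y).hasGradientAt
  set φ' : ℝ → ℝ := fun t => ⟪gradient f (x + t • v), v⟫ with hφ'def
  have hφ : ∀ t ∈ Set.uIcc (0:ℝ) 1, HasDerivAt (fun t : ℝ => f (x + t • v)) (φ' t) t := by
    intro t _
    have hc : HasDerivAt (fun t : ℝ => x + t • v) v t := by
      simpa using ((hasDerivAt_id t).smul_const v).const_add x
    have h := (hgrad (x + t • v)).comp_hasDerivAt t hc
    exact h.congr_deriv (by rw [InnerProductSpace.toDual_apply_apply])
  have hgc : Continuous (gradient f) := hLip.continuous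
  have hφ'c : Continuous φ' :=
    ((hgc.comp (continuous_const.add (continuous_id.smul continuous_const)))).inner
      continuous_const
  have hint : ∫ t in (0:ℝ)..1, φ' t = f (x + v) - f x := by
    have h := intervalIntegral.integral_eq_sub_of_hasDerivAt hφ (hφ'c.intervalIntegrable 0 1)
    simpa using h
  have hb : ∀ t ∈ Set.Icc (0:ℝ) 1, φ' t ≤ ⟪gradient f x, v⟫ + (L * ‖v‖ ^ 2) * t := by
    intro t ht
    have h1 : ‖gradient f (x + t • v) - gradient f x‖ ≤ L * (t * ‖v‖) := by
      have h := hLip.dist_le_mul (x + t • v) x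
      rw [dist_eq_norm, dist_eq_norm] at h
      have h2 : x + t • v - x = t • v := by abel
      rw [h2, norm_smul, Real.norm_eq_abs, abs_of_nonneg ht.1] at h
      simpa [Real.coe_toNNReal L hL, mul_assoc] using h
    have h2 : ⟪gradient f (x + t • v) - gradient f x, v⟫
        ≤ ‖gradient f (x + t • v) - gradient f x‖ * ‖v‖ := real_inner_le_norm _ _
    have h3 : φ' t - ⟪gradient f x, v⟫ = ⟪gradient f (x + t • v) - gradient f x, v⟫ := by
      rw [inner_sub_left]
    have h4 : ‖gradient f (x + t • v) - gradient f x‖ * ‖v‖ ≤ L * (t * ‖v‖) * ‖v‖ :=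
      mul_le_mul_of_nonneg_right h1 (norm_nonneg v)
    have h5 : L * (t * ‖v‖) * ‖v‖ = (L * ‖v‖ ^ 2) * t := by ring
    linarith
  have hi1 : IntervalIntegrable (fun _ : ℝ => ⟪gradient f x, v⟫) volume 0 1 := by
    apply Continuous.intervalIntegrable; fun_prop
  have hi2 : IntervalIntegrable (fun t : ℝ => L * ‖v‖ ^ 2 * t) volume 0 1 := by
    apply Continuous.intervalIntegrable; fun_prop
  have hmono := intervalIntegral.integral_mono_on (μ := volume) (by norm_num : (0:ℝ) ≤ 1)
    (hφ'c.intervalIntegrable 0 1) (hi1.add hi2) hb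
  have hcalc : ∫ t in (0:ℝ)..1, (⟪gradient f x, v⟫ + (L * ‖v‖ ^ 2) * t)
      = ⟪gradient f x, v⟫ + (L * ‖v‖ ^ 2) / 2 := by
    rw [intervalIntegral.integral_add hi1 hi2, intervalIntegral.integral_const,
      intervalIntegral.integral_const_mul]
    ring_nf
    rw [integral_id]
    ring
  rw [hint, hcalc] at hmono
  linarith


set_option maxHeartbeats 400000 in
lemma rsgd_inner_condexp {Ω : Type*} [MeasureSpace Ω] [IsProbabilityMeasure (ℙ : Measure Ω)]
    {H : Type*} [NormedAddCommGroup H] [InnerProductSpace ℝ H] [CompleteSpace H]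
    (𝓕 : Filtration ℕ (inferInstance : MeasurableSpace Ω)) (k : ℕ)
    {g a : Ω → H} (hg : MemLp g 2 ℙ) (ha : MemLp a 2 ℙ)
    (ham : StronglyMeasurable[𝓕 k] a)
    (hmean : condExp (𝓕 k) ℙ g =ᵐ[ℙ] a) :
    ∫ ω, ⟪a ω, g ω⟫ ∂ℙ = ∫ ω, ‖a ω‖ ^ 2 ∂ℙ := by
  have hm : 𝓕 k ≤ (inferInstance : MeasurableSpace Ω) := 𝓕.le k
  set A2 : Lp H 2 ℙ := ha.toLp a with hA2
  set Gp : Lp H 2 ℙ := hg.toLp g with hGp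
  have hA2m : AEStronglyMeasurable[𝓕 k] (A2 : Ω → H) ℙ := ⟨a, ham, ha.coeFn_toLp⟩
  have hcondeq : (condExpL2 (μ := ℙ) H ℝ hm Gp : Ω → H) =ᵐ[ℙ] condExp (𝓕 k) ℙ g := by
    refine ae_eq_condExp_of_forall_setIntegral_eq hm (hg.integrable one_le_two)
      (fun s _ hμs => integrableOn_condExpL2_of_measure_ne_top hm hμs.ne Gp)
      (fun s hs hμs => ?_) (aestronglyMeasurable_condExpL2 hm Gp)
    rw [integral_condExpL2_eq hm Gp hs hμs.ne]
    exact setIntegral_congr_ae (hm s hs) (hg.coeFn_toLp.mono fun ω hω _ => hω)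
  have h1 : ∫ ω, ⟪a ω, g ω⟫ ∂ℙ = ∫ ω, ⟪Gp ω, A2 ω⟫ ∂ℙ := by
    refine integral_congr_ae ?_
    filter_upwards [ha.coeFn_toLp, hg.coeFn_toLp] with ω h1 h2
    rw [h1, h2, real_inner_comm]
  have h2 : ∫ ω, ⟪Gp ω, A2 ω⟫ ∂ℙ = inner (𝕜 := ℝ) Gp A2 := (L2.inner_def Gp A2).symm
  have h3 : inner (𝕜 := ℝ) Gp A2
      = inner (𝕜 := ℝ) ((condExpL2 (μ := ℙ) H ℝ hm Gp : Lp H 2 ℙ)) A2 :=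
    (inner_condExpL2_eq_inner_fun hm Gp A2 hA2m).symm
  have h4 : inner (𝕜 := ℝ) ((condExpL2 (μ := ℙ) H ℝ hm Gp : Lp H 2 ℙ)) A2
      = ∫ ω, ⟪(condExpL2 (μ := ℙ) H ℝ hm Gp : Ω → H) ω, A2 ω⟫ ∂ℙ := L2.inner_def _ _
  have h5 : ∫ ω, ⟪(condExpL2 (μ := ℙ) H ℝ hm Gp : Ω → H) ω, A2 ω⟫ ∂ℙ
      = ∫ ω, ‖a ω‖ ^ 2 ∂ℙ := by
    refine integral_congr_ae ?_
    filter_upwards [hcondeq, hmean, ha.coeFn_toLp] with ω hω1 hω2 hω3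
    rw [hω1, hω2, hω3, real_inner_self_eq_norm_sq]
  rw [h1, h2, h3, h4, h5]

set_option maxHeartbeats 1600000 in
/-- Theorem 2 (second assertion) of the paper in the Euclidean/Hilbert setting:
for RSGD with monotone nonincreasing step sizes in `(0,1)`, some of which lie
below `2/L`, there exist `C₁, C₂ > 0` such that for every `K ≥ 1`,
`(1/K) ∑_{k<K} E[‖∇f(x_k)‖²] ≤ (C₁ + (C₂σ²/b) ∑_{k<K} α_k²) / (K α_{K−1})`. -/
theorem rsgd_monotone_step_sum_bound
    {Ω : Type*} [MeasureSpace Ω] [IsProbabilityMeasure (ℙ : Measure Ω)]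
    {H : Type*} [NormedAddCommGroup H] [InnerProductSpace ℝ H] [CompleteSpace H]
    (𝓕 : Filtration ℕ (inferInstance : MeasurableSpace Ω))
    (f : H → ℝ) (hf : ContDiff ℝ 1 f)
    (L : ℝ) (hL : 0 < L) (hLip : LipschitzWith L.toNNReal (gradient f))
    (fstar : ℝ) (hbdd : ∀ y, fstar ≤ f y)
    (x₀ : H) (α : ℕ → ℝ) (hα : ∀ k, 0 < α k)
    (b : ℕ) (hb : 1 ≤ b) (σ2 : ℝ) (hσ2 : 0 ≤ σ2)
    (g : ℕ → Ω → H)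
    (hg_meas : ∀ k, StronglyMeasurable[𝓕 (k + 1)] (g k))
    (hg_L2 : ∀ k, MemLp (g k) 2 ℙ)
    (x : ℕ → Ω → H)
    (hx0 : x 0 = fun _ => x₀)
    (hxrec : ∀ k, x (k + 1) = fun ω => x k ω - α k • g k ω)
    (hx_meas : ∀ k, StronglyMeasurable[𝓕 k] (x k))
    (hg_mean : ∀ k, condExp (𝓕 k) ℙ (g k) =ᵐ[ℙ] fun ω => gradient f (x k ω))
    (hg_var : ∀ k, ∀ᵐ ω ∂ℙ,
      condExp (𝓕 k) ℙ (fun ω' => ‖g k ω' - gradient f (x k ω')‖ ^ 2) ω ≤ σ2 / b)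
    (hx_int : ∀ k, Integrable (fun ω => ‖x k ω‖ ^ 2) ℙ)
    (hgrad_int : ∀ k, Integrable (fun ω => ‖gradient f (x k ω)‖ ^ 2) ℙ)
    (hf_int : ∀ k, Integrable (fun ω => f (x k ω)) ℙ)
    (hα1 : ∀ k, α k < 1) (hmono : Antitone α)
    (k₀ : ℕ) (hk₀ : α k₀ < 2 / L) :
    ∃ C₁ > (0 : ℝ), ∃ C₂ > (0 : ℝ), ∀ K : ℕ, 1 ≤ K →
      (1 / (K : ℝ)) * ∑ k ∈ Finset.range K, ∫ ω, ‖gradient f (x k ω)‖ ^ 2 ∂ℙ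
        ≤ (C₁ + C₂ * σ2 / b * ∑ k ∈ Finset.range K, α k ^ 2)
          * (1 / ((K : ℝ) * α (K - 1))) := by
  classical
  have hb' : (0:ℝ) < (b:ℝ) := by exact_mod_cast Nat.lt_of_lt_of_le Nat.zero_lt_one hb
  have ha_sm : ∀ k, StronglyMeasurable[𝓕 k] (fun ω => gradient f (x k ω)) :=
    fun k => hLip.continuous.comp_stronglyMeasurable (hx_meas k)
  have ha_asm : ∀ k, AEStronglyMeasurable (fun ω => gradient f (x k ω)) ℙ :=
    fun k => ((ha_sm k).mono (𝓕.le k)).aestronglyMeasurable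
  have ha_L2 : ∀ k, MemLp (fun ω => gradient f (x k ω)) 2 ℙ :=
    fun k => (memLp_two_iff_integrable_sq_norm (ha_asm k)).mpr (hgrad_int k)
  have hcross : ∀ k, ∫ ω, ⟪gradient f (x k ω), g k ω⟫ ∂ℙ
      = ∫ ω, ‖gradient f (x k ω)‖ ^ 2 ∂ℙ :=
    fun k => rsgd_inner_condexp 𝓕 k (hg_L2 k) (ha_L2 k) (ha_sm k) (hg_mean k)
  have hG0 : ∀ k, 0 ≤ ∫ ω, ‖gradient f (x k ω)‖ ^ 2 ∂ℙ :=
    fun k => integral_nonneg fun ω => by positivity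
  have hFb : ∀ k, fstar ≤ ∫ ω, f (x k ω) ∂ℙ := by
    intro k
    calc fstar = ∫ (_ : Ω), fstar ∂ℙ := by simp
      _ ≤ ∫ ω, f (x k ω) ∂ℙ := integral_mono (integrable_const _) (hf_int k) fun ω => hbdd _
  have hg_sq_int : ∀ k, Integrable (fun ω => ‖g k ω‖ ^ 2) ℙ :=
    fun k => (memLp_two_iff_integrable_sq_norm (hg_L2 k).aestronglyMeasurable).mp (hg_L2 k)
  have hinner_int : ∀ k, Integrable (fun ω => ⟪gradient f (x k ω), g k ω⟫) ℙ := by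
    intro k
    have h := L2.integrable_inner (𝕜 := ℝ)
      ((ha_L2 k).toLp (fun ω => gradient f (x k ω))) ((hg_L2 k).toLp (g k))
    refine h.congr ?_
    filter_upwards [(ha_L2 k).coeFn_toLp, (hg_L2 k).coeFn_toLp] with ω h1 h2
    rw [h1, h2]
  have he_asm : ∀ k, AEStronglyMeasurable (fun ω => g k ω - gradient f (x k ω)) ℙ :=
    fun k => (hg_L2 k).aestronglyMeasurable.sub (ha_asm k)
  have he_L2 : ∀ k, MemLp (fun ω => g k ω - gradient f (x k ω)) 2 ℙ :=
    fun k => (hg_L2 k).sub (ha_L2 k)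
  have he_sq_int : ∀ k, Integrable (fun ω => ‖g k ω - gradient f (x k ω)‖ ^ 2) ℙ :=
    fun k => (memLp_two_iff_integrable_sq_norm (he_asm k)).mp (he_L2 k)
  have hvar : ∀ k, ∫ ω, ‖g k ω - gradient f (x k ω)‖ ^ 2 ∂ℙ ≤ σ2 / b := by
    intro k
    rw [← integral_condExp (𝓕.le k)
      (f := fun ω => ‖g k ω - gradient f (x k ω)‖ ^ 2)]
    calc ∫ ω, condExp (𝓕 k) ℙ (fun ω' => ‖g k ω' - gradient f (x k ω')‖ ^ 2) ω ∂ℙ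
        ≤ ∫ (_ : Ω), σ2 / b ∂ℙ :=
          integral_mono_ae integrable_condExp (integrable_const _) (hg_var k)
      _ = σ2 / b := by simp
  -- the cross error term has zero mean
  have hcross_eq : ∀ k, (fun ω => ⟪gradient f (x k ω), g k ω - gradient f (x k ω)⟫)
      = fun ω => ⟪gradient f (x k ω), g k ω⟫ - ‖gradient f (x k ω)‖ ^ 2 := by
    intro k; funext ω
    rw [inner_sub_right, real_inner_self_eq_norm_sq]
  have hcross_int : ∀ k,
      Integrable (fun ω => ⟪gradient f (x k ω), g k ω - gradient f (x k ω)⟫) ℙ := by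
    intro k; rw [hcross_eq k]; exact (hinner_int k).sub (hgrad_int k)
  have hcross_zero : ∀ k,
      ∫ ω, ⟪gradient f (x k ω), g k ω - gradient f (x k ω)⟫ ∂ℙ = 0 := by
    intro k
    rw [hcross_eq k, integral_sub (hinner_int k) (hgrad_int k), hcross k, sub_self]
  -- second moment of the stochastic gradient
  have hgsq : ∀ k, ∫ ω, ‖g k ω‖ ^ 2 ∂ℙ
      ≤ (∫ ω, ‖gradient f (x k ω)‖ ^ 2 ∂ℙ) + σ2 / b := by
    intro k
    have hexp : (fun ω => ‖g k ω‖ ^ 2) = fun ω =>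
        (‖gradient f (x k ω)‖ ^ 2
          + 2 * ⟪gradient f (x k ω), g k ω - gradient f (x k ω)⟫)
          + ‖g k ω - gradient f (x k ω)‖ ^ 2 := by
      funext ω
      have e1 : gradient f (x k ω) + (g k ω - gradient f (x k ω)) = g k ω := by abel
      calc ‖g k ω‖ ^ 2
          = ‖gradient f (x k ω) + (g k ω - gradient f (x k ω))‖ ^ 2 := by rw [e1]
        _ = _ := by rw [norm_add_sq_real]
    have i0 : Integrable (fun ω =>
        2 * ⟪gradient f (x k ω), g k ω - gradient f (x k ω)⟫) ℙ :=
      (hcross_int k).const_mul 2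
    have i1 : Integrable (fun ω => ‖gradient f (x k ω)‖ ^ 2
        + 2 * ⟪gradient f (x k ω), g k ω - gradient f (x k ω)⟫) ℙ :=
      (hgrad_int k).add i0
    rw [hexp, integral_add i1 (he_sq_int k), integral_add (hgrad_int k) i0,
      integral_const_mul, hcross_zero k]
    have := hvar k
    linarith
  -- expected descent step
  have hstep2 : ∀ k, ∫ ω, f (x (k+1) ω) ∂ℙ
      ≤ (∫ ω, f (x k ω) ∂ℙ)
        - α k * (1 - L * α k / 2) * ∫ ω, ‖gradient f (x k ω)‖ ^ 2 ∂ℙ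
        + L * α k ^ 2 / 2 * (σ2 / b) := by
    intro k
    have hpt : ∀ ω, f (x (k+1) ω) ≤ f (x k ω) - α k * ⟪gradient f (x k ω), g k ω⟫
        + L / 2 * (α k ^ 2 * ‖g k ω‖ ^ 2) := by
      intro ω
      have h1 : x (k+1) ω = x k ω + (-(α k)) • g k ω := by
        rw [hxrec k]; simp [sub_eq_add_neg, neg_smul]
      rw [h1]
      have h2 := rsgd_descent_lemma f hf hL.le hLip (x k ω) ((-(α k)) • g k ω)
      have h3 : ‖(-(α k)) • g k ω‖ ^ 2 = α k ^ 2 * ‖g k ω‖ ^ 2 := by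
        rw [norm_smul, Real.norm_eq_abs, abs_neg, abs_of_pos (hα k)]; ring
      have h4 : ⟪gradient f (x k ω), (-(α k)) • g k ω⟫
          = -(α k * ⟪gradient f (x k ω), g k ω⟫) := by
        rw [real_inner_smul_right]; ring
      rw [h3, h4] at h2
      linarith
    have i2 : Integrable (fun ω => α k * ⟪gradient f (x k ω), g k ω⟫) ℙ :=
      (hinner_int k).const_mul (α k)
    have i3 : Integrable (fun ω => f (x k ω)
        - α k * ⟪gradient f (x k ω), g k ω⟫) ℙ := (hf_int k).sub i2
    have i4 : Integrable (fun ω => α k ^ 2 * ‖g k ω‖ ^ 2) ℙ :=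
      (hg_sq_int k).const_mul (α k ^ 2)
    have i5 : Integrable (fun ω => L / 2 * (α k ^ 2 * ‖g k ω‖ ^ 2)) ℙ :=
      i4.const_mul (L / 2)
    have hR_int : Integrable (fun ω => f (x k ω) - α k * ⟪gradient f (x k ω), g k ω⟫
        + L / 2 * (α k ^ 2 * ‖g k ω‖ ^ 2)) ℙ := i3.add i5
    have hmono2 := integral_mono (hf_int (k+1)) hR_int hpt
    rw [integral_add i3 i5, integral_sub (hf_int k) i2,
      integral_const_mul, integral_const_mul, integral_const_mul, hcross k] at hmono2
    have hcoef : (0:ℝ) ≤ L / 2 * α k ^ 2 := by positivity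
    nlinarith [mul_le_mul_of_nonneg_left (hgsq k) hcoef]
  -- constants
  have hLα : α k₀ * L < 2 := (lt_div_iff₀ hL).mp hk₀
  have hc : 0 < 1 - L * α k₀ / 2 := by nlinarith
  have hD0 : 0 ≤ L * σ2 / (2 * b) := by positivity
  have hkey : ∀ k, k₀ ≤ k →
      (1 - L * α k₀ / 2) * (α k * ∫ ω, ‖gradient f (x k ω)‖ ^ 2 ∂ℙ)
        ≤ (∫ ω, f (x k ω) ∂ℙ) - (∫ ω, f (x (k+1) ω) ∂ℙ) + L * σ2 / (2 * b) * α k ^ 2 := by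
    intro k hk
    have h1 := hstep2 k
    have hαk : α k ≤ α k₀ := hmono hk
    have hLαk : L * α k ≤ L * α k₀ := mul_le_mul_of_nonneg_left hαk hL.le
    have hag : 0 ≤ α k * ∫ ω, ‖gradient f (x k ω)‖ ^ 2 ∂ℙ :=
      mul_nonneg (hα k).le (hG0 k)
    have h2 : (1 - L * α k₀ / 2) * (α k * ∫ ω, ‖gradient f (x k ω)‖ ^ 2 ∂ℙ)
        ≤ (1 - L * α k / 2) * (α k * ∫ ω, ‖gradient f (x k ω)‖ ^ 2 ∂ℙ) :=
      mul_le_mul_of_nonneg_right (by linarith) hag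
    have hbne : (b:ℝ) ≠ 0 := hb'.ne'
    have h3 : L * α k ^ 2 / 2 * (σ2 / b) = L * σ2 / (2 * b) * α k ^ 2 := by
      field_simp
    nlinarith [h1, h2]
  have htel : ∀ K, k₀ ≤ K →
      (1 - L * α k₀ / 2) * ∑ k ∈ Finset.Ico k₀ K,
          (α k * ∫ ω, ‖gradient f (x k ω)‖ ^ 2 ∂ℙ)
        ≤ (∫ ω, f (x k₀ ω) ∂ℙ) - (∫ ω, f (x K ω) ∂ℙ)
          + L * σ2 / (2 * b) * ∑ k ∈ Finset.Ico k₀ K, α k ^ 2 := by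
    intro K hK
    induction K, hK using Nat.le_induction with
    | base => simp
    | succ K hK ih =>
      rw [Finset.sum_Ico_succ_top hK, Finset.sum_Ico_succ_top hK]
      have h1 := hkey K hK
      nlinarith [ih, h1]
  -- choose the constants
  have hA0 : 0 ≤ ∑ k ∈ Finset.range k₀, ∫ ω, ‖gradient f (x k ω)‖ ^ 2 ∂ℙ :=
    Finset.sum_nonneg fun k _ => hG0 k
  have hB0 : 0 ≤ ((∫ ω, f (x k₀ ω) ∂ℙ) - fstar) / (1 - L * α k₀ / 2) :=
    div_nonneg (by linarith [hFb k₀]) hc.le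
  refine ⟨(∑ k ∈ Finset.range k₀, ∫ ω, ‖gradient f (x k ω)‖ ^ 2 ∂ℙ)
      + ((∫ ω, f (x k₀ ω) ∂ℙ) - fstar) / (1 - L * α k₀ / 2) + 1, by linarith,
    L / (2 * (1 - L * α k₀ / 2)), div_pos hL (by linarith), ?_⟩
  intro K hK
  have hKpos : (0:ℝ) < (K:ℝ) := by exact_mod_cast hK
  have hαK : 0 < α (K-1) := hα _
  have h1 : α (K-1) * ∑ k ∈ Finset.range K, ∫ ω, ‖gradient f (x k ω)‖ ^ 2 ∂ℙ
      ≤ ∑ k ∈ Finset.range K, (α k * ∫ ω, ‖gradient f (x k ω)‖ ^ 2 ∂ℙ) := by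
    rw [Finset.mul_sum]
    refine Finset.sum_le_sum fun k hk => ?_
    have hk' : k ≤ K - 1 := by
      have := Finset.mem_range.mp hk; omega
    exact mul_le_mul_of_nonneg_right (hmono hk') (hG0 k)
  have hdiffIco : Finset.range K \ Finset.range k₀ = Finset.Ico k₀ K := by
    ext j; simp [Finset.mem_Ico]; omega
  have hsplit : ∑ k ∈ Finset.range K, (α k * ∫ ω, ‖gradient f (x k ω)‖ ^ 2 ∂ℙ)
      = (∑ k ∈ Finset.range K ∩ Finset.range k₀,
          (α k * ∫ ω, ‖gradient f (x k ω)‖ ^ 2 ∂ℙ))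
        + ∑ k ∈ Finset.Ico k₀ K, (α k * ∫ ω, ‖gradient f (x k ω)‖ ^ 2 ∂ℙ) := by
    rw [← hdiffIco]
    exact (Finset.sum_inter_add_sum_sdiff _ _ _).symm
  have h2 : ∑ k ∈ Finset.range K ∩ Finset.range k₀,
        (α k * ∫ ω, ‖gradient f (x k ω)‖ ^ 2 ∂ℙ)
      ≤ ∑ k ∈ Finset.range k₀, ∫ ω, ‖gradient f (x k ω)‖ ^ 2 ∂ℙ := by
    calc ∑ k ∈ Finset.range K ∩ Finset.range k₀,
          (α k * ∫ ω, ‖gradient f (x k ω)‖ ^ 2 ∂ℙ)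
        ≤ ∑ k ∈ Finset.range K ∩ Finset.range k₀, ∫ ω, ‖gradient f (x k ω)‖ ^ 2 ∂ℙ :=
          Finset.sum_le_sum fun k _ => by nlinarith [hα1 k, hα k, hG0 k]
      _ ≤ ∑ k ∈ Finset.range k₀, ∫ ω, ‖gradient f (x k ω)‖ ^ 2 ∂ℙ :=
          Finset.sum_le_sum_of_subset_of_nonneg Finset.inter_subset_right
            fun k _ _ => hG0 k
  have hsq0 : (0:ℝ) ≤ ∑ k ∈ Finset.range K, α k ^ 2 :=
    Finset.sum_nonneg fun k _ => sq_nonneg _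
  have h3 : ∑ k ∈ Finset.Ico k₀ K, (α k * ∫ ω, ‖gradient f (x k ω)‖ ^ 2 ∂ℙ)
      ≤ (((∫ ω, f (x k₀ ω) ∂ℙ) - fstar)
          + L * σ2 / (2 * b) * ∑ k ∈ Finset.range K, α k ^ 2) / (1 - L * α k₀ / 2) := by
    rcases le_or_gt k₀ K with h | h
    · have ht := htel K h
      have hFK := hFb K
      have hsub : ∑ k ∈ Finset.Ico k₀ K, α k ^ 2 ≤ ∑ k ∈ Finset.range K, α k ^ 2 :=
        Finset.sum_le_sum_of_subset_of_nonneg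
          (fun j hj => by simp [Finset.mem_Ico] at hj ⊢; omega)
          (fun k _ _ => sq_nonneg _)
      rw [le_div_iff₀ hc]
      nlinarith [mul_le_mul_of_nonneg_left hsub hD0]
    · rw [Finset.Ico_eq_empty (by omega), Finset.sum_empty]
      exact div_nonneg (by nlinarith [hFb k₀, mul_nonneg hD0 hsq0]) hc.le
  -- put everything together
  have hbne : (b:ℝ) ≠ 0 := hb'.ne'
  have hcne : (1 - L * α k₀ / 2) ≠ 0 := hc.ne'
  have hDc : (((∫ ω, f (x k₀ ω) ∂ℙ) - fstar)
        + L * σ2 / (2 * b) * ∑ k ∈ Finset.range K, α k ^ 2) / (1 - L * α k₀ / 2)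
      = ((∫ ω, f (x k₀ ω) ∂ℙ) - fstar) / (1 - L * α k₀ / 2)
        + L / (2 * (1 - L * α k₀ / 2)) * σ2 / b * ∑ k ∈ Finset.range K, α k ^ 2 := by
    have hcne2 : (2 : ℝ) - L * α k₀ ≠ 0 := by
      intro h0
      apply hcne
      linarith [h0]
    field_simp
  have hfinal : α (K-1) * ∑ k ∈ Finset.range K, ∫ ω, ‖gradient f (x k ω)‖ ^ 2 ∂ℙ
      ≤ ((∑ k ∈ Finset.range k₀, ∫ ω, ‖gradient f (x k ω)‖ ^ 2 ∂ℙ)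
          + ((∫ ω, f (x k₀ ω) ∂ℙ) - fstar) / (1 - L * α k₀ / 2) + 1)
        + L / (2 * (1 - L * α k₀ / 2)) * σ2 / b * ∑ k ∈ Finset.range K, α k ^ 2 := by
    rw [hDc] at h3
    linarith [h1, hsplit, h2, h3]
  have hS0 : (0:ℝ) ≤ ∑ k ∈ Finset.range K, ∫ ω, ‖gradient f (x k ω)‖ ^ 2 ∂ℙ :=
    Finset.sum_nonneg fun k _ => hG0 k
  set S := ∑ k ∈ Finset.range K, ∫ ω, ‖gradient f (x k ω)‖ ^ 2 ∂ℙ with hSdef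
  set R := (∑ k ∈ Finset.range k₀, ∫ ω, ‖gradient f (x k ω)‖ ^ 2 ∂ℙ)
      + ((∫ ω, f (x k₀ ω) ∂ℙ) - fstar) / (1 - L * α k₀ / 2) + 1
      + L / (2 * (1 - L * α k₀ / 2)) * σ2 / ↑b * ∑ k ∈ Finset.range K, α k ^ 2 with hRdef
  calc (1 / (K:ℝ)) * S = S / (K:ℝ) := by ring
    _ ≤ R / ((K:ℝ) * α (K-1)) := by
        rw [div_le_div_iff₀ hKpos (mul_pos hKpos hαK)]
        nlinarith [mul_le_mul_of_nonneg_left hfinal hKpos.le]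
    _ = R * (1 / ((K:ℝ) * α (K-1))) := by ring
end

section
/- For every integer K ≥ 1 and every x ∈ H, ∑_{k=0}^{K−1} α_k V_k(x) ≤ (1/2) ∑_{k=0}^{K−1} α_k² (σ²/b + E[‖∇f(x_k)‖²]) + (1/2)(E[‖x_0 − x‖²] − E[‖x_K − x‖²]). -/
open MeasureTheory ProbabilityTheory Filter RealInnerProductSpace

private lemma integrable_inner_of_memLp {Ω H : Type*} [MeasurableSpace Ω] {μ : Measure Ω}
    [NormedAddCommGroup H] [InnerProductSpace ℝ H]
    {F G : Ω → H} (hF : MemLp F 2 μ) (hG : MemLp G 2 μ) :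
    Integrable (fun ω => ⟪F ω, G ω⟫) μ := by
  have h := MeasureTheory.L2.integrable_inner (𝕜 := ℝ) (hF.toLp F) (hG.toLp G)
  refine h.congr ?_
  filter_upwards [hF.coeFn_toLp, hG.coeFn_toLp] with ω h1 h2
  rw [h1, h2]

private lemma integral_inner_condExp_eq {Ω H : Type*} {m m0 : MeasurableSpace Ω}
    (hm : m ≤ m0) {μ : Measure Ω} [IsProbabilityMeasure μ]
    [NormedAddCommGroup H] [InnerProductSpace ℝ H] [CompleteSpace H]
    {G M Y : Ω → H} (hG : MemLp G 2 μ)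
    (hM : condExp m μ G =ᵐ[μ] M)
    (hY : StronglyMeasurable[m] Y) (hYL : MemLp Y 2 μ) :
    ∫ ω, ⟪G ω, Y ω⟫ ∂μ = ∫ ω, ⟪M ω, Y ω⟫ ∂μ := by
  set Gl := hG.toLp G with hGl
  set Yl := hYL.toLp Y with hYl
  have hYm' : AEStronglyMeasurable[m] (Yl : Ω → H) μ :=
    AEStronglyMeasurable.congr hY.aestronglyMeasurable hYL.coeFn_toLp.symm
  have hcl : (condExpL2 H ℝ hm Gl : Ω → H) =ᵐ[μ] M := by
    refine (ae_eq_condExp_of_forall_setIntegral_eq hm (hG.integrable one_le_two) ?_ ?_ ?_).trans hM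
    · intro s _ hμs
      exact integrableOn_condExpL2_of_measure_ne_top hm hμs.ne _
    · intro s hs hμs
      rw [integral_condExpL2_eq hm Gl hs hμs.ne]
      exact setIntegral_congr_ae (hm s hs) (hG.coeFn_toLp.mono fun ω h _ => h)
    · exact aestronglyMeasurable_condExpL2 hm Gl
  calc ∫ ω, ⟪G ω, Y ω⟫ ∂μ
      = ∫ ω, ⟪Gl ω, Yl ω⟫ ∂μ := by
        refine integral_congr_ae ?_
        filter_upwards [hG.coeFn_toLp, hYL.coeFn_toLp] with ω h1 h2
        rw [h1, h2]
    _ = ⟪Gl, Yl⟫ := (L2.inner_def Gl Yl).symm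
    _ = ⟪(condExpL2 H ℝ hm Gl : Ω →₂[μ] H), Yl⟫ :=
        (inner_condExpL2_eq_inner_fun hm Gl Yl hYm').symm
    _ = ∫ ω, ⟪(condExpL2 H ℝ hm Gl : Ω → H) ω, Yl ω⟫ ∂μ := L2.inner_def _ _
    _ = ∫ ω, ⟪M ω, Y ω⟫ ∂μ := by
        refine integral_congr_ae ?_
        filter_upwards [hcl, hYL.coeFn_toLp] with ω h1 h2
        rw [h1, h2]

/-- Lemma 4 of the paper in the Euclidean/Hilbert setting (curvature bound `κ = 0`,
so `ζ(κ,c) = 1`): for every `K ≥ 1` and `x ∈ H`, with `V_k(x) = E[⟪∇f(x_k), x_k − x⟫]`,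
`∑_{k<K} α_k V_k(x) ≤ (1/2) ∑_{k<K} α_k²(σ²/b + E[‖∇f(x_k)‖²])
  + (1/2)(E[‖x_0 − x‖²] − E[‖x_K − x‖²])`. -/
theorem rsgd_weighted_vi_sum_bound
    {Ω : Type*} [MeasureSpace Ω] [IsProbabilityMeasure (ℙ : Measure Ω)]
    {H : Type*} [NormedAddCommGroup H] [InnerProductSpace ℝ H] [CompleteSpace H]
    (𝓕 : Filtration ℕ (inferInstance : MeasurableSpace Ω))
    (f : H → ℝ) (hf : ContDiff ℝ 1 f)
    (x₀ : H) (α : ℕ → ℝ) (hα : ∀ k, 0 < α k)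
    (b : ℕ) (hb : 1 ≤ b) (σ2 : ℝ) (hσ2 : 0 ≤ σ2)
    (g : ℕ → Ω → H)
    (hg_meas : ∀ k, StronglyMeasurable[𝓕 (k + 1)] (g k))
    (hg_L2 : ∀ k, MemLp (g k) 2 ℙ)
    (x : ℕ → Ω → H)
    (hx0 : x 0 = fun _ => x₀)
    (hxrec : ∀ k, x (k + 1) = fun ω => x k ω - α k • g k ω)
    (hx_meas : ∀ k, StronglyMeasurable[𝓕 k] (x k))
    (hg_mean : ∀ k, condExp (𝓕 k) ℙ (g k) =ᵐ[ℙ] fun ω => gradient f (x k ω))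
    (hg_var : ∀ k, ∀ᵐ ω ∂ℙ,
      condExp (𝓕 k) ℙ (fun ω' => ‖g k ω' - gradient f (x k ω')‖ ^ 2) ω ≤ σ2 / b)
    (hx_int : ∀ k, Integrable (fun ω => ‖x k ω‖ ^ 2) ℙ)
    (hgrad_int : ∀ k, Integrable (fun ω => ‖gradient f (x k ω)‖ ^ 2) ℙ)
    : ∀ K : ℕ, 1 ≤ K → ∀ x' : H,
      ∑ k ∈ Finset.range K,
          α k * ∫ ω, ⟪gradient f (x k ω), x k ω - x'⟫ ∂ℙ
        ≤ (1 / 2) * ∑ k ∈ Finset.range K,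
              α k ^ 2 * (σ2 / b + ∫ ω, ‖gradient f (x k ω)‖ ^ 2 ∂ℙ)
          + (1 / 2) * ((∫ ω, ‖x 0 ω - x'‖ ^ 2 ∂ℙ) - ∫ ω, ‖x K ω - x'‖ ^ 2 ∂ℙ) := by
  intro K hK x'
  -- basic measurability / integrability facts
  have hxmem : ∀ k, MemLp (x k) 2 ℙ := fun k =>
    (memLp_two_iff_integrable_sq_norm
      ((hx_meas k).mono (𝓕.le k)).aestronglyMeasurable).mpr (hx_int k)
  have hgradcont : Continuous (gradient f) := by
    have h1 : Continuous (fderiv ℝ f) := hf.continuous_fderiv one_ne_zero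
    exact (InnerProductSpace.toDual ℝ H).symm.continuous.comp h1
  have hNm : ∀ k, StronglyMeasurable[𝓕 k] (fun ω => gradient f (x k ω)) := fun k =>
    hgradcont.comp_stronglyMeasurable (hx_meas k)
  have hNmem : ∀ k, MemLp (fun ω => gradient f (x k ω)) 2 ℙ := fun k =>
    (memLp_two_iff_integrable_sq_norm
      ((hNm k).mono (𝓕.le k)).aestronglyMeasurable).mpr (hgrad_int k)
  have key : ∀ k, α k * ∫ ω, ⟪gradient f (x k ω), x k ω - x'⟫ ∂ℙ
      ≤ 1 / 2 * (α k ^ 2 * (σ2 / b + ∫ ω, ‖gradient f (x k ω)‖ ^ 2 ∂ℙ))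
        + 1 / 2 * ((∫ ω, ‖x k ω - x'‖ ^ 2 ∂ℙ) - ∫ ω, ‖x (k + 1) ω - x'‖ ^ 2 ∂ℙ) := by
    intro k
    have hYsm : StronglyMeasurable[𝓕 k] (fun ω => x k ω - x') :=
      (hx_meas k).sub stronglyMeasurable_const
    have hYmem : MemLp (fun ω => x k ω - x') 2 ℙ := (hxmem k).sub (memLp_const x')
    have hDmem : MemLp (fun ω => g k ω - gradient f (x k ω)) 2 ℙ :=
      (hg_L2 k).sub (hNmem k)
    have hIY : Integrable (fun ω => ‖x k ω - x'‖ ^ 2) ℙ :=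
      (memLp_two_iff_integrable_sq_norm hYmem.aestronglyMeasurable).mp hYmem
    have hIg2 : Integrable (fun ω => ‖g k ω‖ ^ 2) ℙ :=
      (memLp_two_iff_integrable_sq_norm (hg_L2 k).aestronglyMeasurable).mp (hg_L2 k)
    have hIgY : Integrable (fun ω => ⟪g k ω, x k ω - x'⟫) ℙ :=
      integrable_inner_of_memLp (hg_L2 k) hYmem
    have hIgN : Integrable (fun ω => ⟪g k ω, gradient f (x k ω)⟫) ℙ :=
      integrable_inner_of_memLp (hg_L2 k) (hNmem k)
    have hINN : Integrable (fun ω => ⟪gradient f (x k ω), gradient f (x k ω)⟫) ℙ :=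
      integrable_inner_of_memLp (hNmem k) (hNmem k)
    have hIDN : Integrable (fun ω => ⟪g k ω - gradient f (x k ω), gradient f (x k ω)⟫) ℙ :=
      integrable_inner_of_memLp hDmem (hNmem k)
    have hID2 : Integrable (fun ω => ‖g k ω - gradient f (x k ω)‖ ^ 2) ℙ :=
      (memLp_two_iff_integrable_sq_norm hDmem.aestronglyMeasurable).mp hDmem
    -- tower identities
    have hA : ∫ ω, ⟪g k ω, x k ω - x'⟫ ∂ℙ
        = ∫ ω, ⟪gradient f (x k ω), x k ω - x'⟫ ∂ℙ :=
      integral_inner_condExp_eq (𝓕.le k) (hg_L2 k) (hg_mean k) hYsm hYmem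
    have hB : ∫ ω, ⟪g k ω, gradient f (x k ω)⟫ ∂ℙ
        = ∫ ω, ⟪gradient f (x k ω), gradient f (x k ω)⟫ ∂ℙ :=
      integral_inner_condExp_eq (𝓕.le k) (hg_L2 k) (hg_mean k) (hNm k) (hNmem k)
    -- variance bound
    have hvar : ∫ ω, ‖g k ω - gradient f (x k ω)‖ ^ 2 ∂ℙ ≤ σ2 / b := by
      rw [← integral_condExp (𝓕.le k)
        (f := fun ω' => ‖g k ω' - gradient f (x k ω')‖ ^ 2) (μ := ℙ)]
      calc ∫ ω, condExp (𝓕 k) ℙ (fun ω' => ‖g k ω' - gradient f (x k ω')‖ ^ 2) ω ∂ℙ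
          ≤ ∫ _ω, (σ2 / b : ℝ) ∂ℙ :=
            integral_mono_ae integrable_condExp (integrable_const _) (hg_var k)
        _ = σ2 / b := by simp
    -- cross term vanishes
    have hcross : ∫ ω, ⟪g k ω - gradient f (x k ω), gradient f (x k ω)⟫ ∂ℙ = 0 := by
      have hpt : (fun ω => ⟪g k ω - gradient f (x k ω), gradient f (x k ω)⟫)
          = fun ω => ⟪g k ω, gradient f (x k ω)⟫
            - ⟪gradient f (x k ω), gradient f (x k ω)⟫ := by
        funext ω; rw [inner_sub_left]
      rw [hpt, integral_sub hIgN hINN, hB, sub_self]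
    -- second moment decomposition
    have hg2 : ∫ ω, ‖g k ω‖ ^ 2 ∂ℙ
        = (∫ ω, ‖g k ω - gradient f (x k ω)‖ ^ 2 ∂ℙ)
          + ∫ ω, ‖gradient f (x k ω)‖ ^ 2 ∂ℙ := by
      have hpt : (fun ω => ‖g k ω‖ ^ 2)
          = fun ω => ‖g k ω - gradient f (x k ω)‖ ^ 2
            + 2 * ⟪g k ω - gradient f (x k ω), gradient f (x k ω)⟫
            + ‖gradient f (x k ω)‖ ^ 2 := by
        funext ω
        have h := norm_add_sq_real (g k ω - gradient f (x k ω)) (gradient f (x k ω))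
        rw [sub_add_cancel] at h
        exact h
      have e1 : ∫ ω, (‖g k ω - gradient f (x k ω)‖ ^ 2
            + 2 * ⟪g k ω - gradient f (x k ω), gradient f (x k ω)⟫
            + ‖gradient f (x k ω)‖ ^ 2) ∂ℙ
          = (∫ ω, (‖g k ω - gradient f (x k ω)‖ ^ 2
              + 2 * ⟪g k ω - gradient f (x k ω), gradient f (x k ω)⟫) ∂ℙ)
            + ∫ ω, ‖gradient f (x k ω)‖ ^ 2 ∂ℙ :=
        integral_add (hID2.add (hIDN.const_mul 2)) (hgrad_int k)
      have e2 : ∫ ω, (‖g k ω - gradient f (x k ω)‖ ^ 2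
            + 2 * ⟪g k ω - gradient f (x k ω), gradient f (x k ω)⟫) ∂ℙ
          = (∫ ω, ‖g k ω - gradient f (x k ω)‖ ^ 2 ∂ℙ)
            + ∫ ω, 2 * ⟪g k ω - gradient f (x k ω), gradient f (x k ω)⟫ ∂ℙ :=
        integral_add hID2 (hIDN.const_mul 2)
      have e3 : ∫ ω, 2 * ⟪g k ω - gradient f (x k ω), gradient f (x k ω)⟫ ∂ℙ
          = 2 * ∫ ω, ⟪g k ω - gradient f (x k ω), gradient f (x k ω)⟫ ∂ℙ :=
        integral_const_mul 2 _
      rw [hpt, e1, e2, e3, hcross]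
      ring
    -- energy expansion
    have hexp : ∫ ω, ‖x (k + 1) ω - x'‖ ^ 2 ∂ℙ
        = (∫ ω, ‖x k ω - x'‖ ^ 2 ∂ℙ)
          - 2 * α k * (∫ ω, ⟪g k ω, x k ω - x'⟫ ∂ℙ)
          + α k ^ 2 * ∫ ω, ‖g k ω‖ ^ 2 ∂ℙ := by
      have hpt : (fun ω => ‖x (k + 1) ω - x'‖ ^ 2)
          = fun ω => ‖x k ω - x'‖ ^ 2
            - 2 * α k * ⟪g k ω, x k ω - x'⟫ + α k ^ 2 * ‖g k ω‖ ^ 2 := by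
        funext ω
        rw [hxrec k]
        have h1 : x k ω - α k • g k ω - x' = (x k ω - x') - α k • g k ω := by abel
        rw [h1, norm_sub_sq_real, real_inner_smul_right, norm_smul, mul_pow,
          Real.norm_eq_abs, sq_abs, real_inner_comm]
        ring
      have e1 : ∫ ω, (‖x k ω - x'‖ ^ 2 - 2 * α k * ⟪g k ω, x k ω - x'⟫
            + α k ^ 2 * ‖g k ω‖ ^ 2) ∂ℙ
          = (∫ ω, (‖x k ω - x'‖ ^ 2 - 2 * α k * ⟪g k ω, x k ω - x'⟫) ∂ℙ)
            + ∫ ω, α k ^ 2 * ‖g k ω‖ ^ 2 ∂ℙ :=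
        integral_add (hIY.sub (hIgY.const_mul (2 * α k))) (hIg2.const_mul (α k ^ 2))
      have e2 : ∫ ω, (‖x k ω - x'‖ ^ 2 - 2 * α k * ⟪g k ω, x k ω - x'⟫) ∂ℙ
          = (∫ ω, ‖x k ω - x'‖ ^ 2 ∂ℙ) - ∫ ω, 2 * α k * ⟪g k ω, x k ω - x'⟫ ∂ℙ :=
        integral_sub hIY (hIgY.const_mul (2 * α k))
      have e3 : ∫ ω, 2 * α k * ⟪g k ω, x k ω - x'⟫ ∂ℙ
          = 2 * α k * ∫ ω, ⟪g k ω, x k ω - x'⟫ ∂ℙ := integral_const_mul _ _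
      have e4 : ∫ ω, α k ^ 2 * ‖g k ω‖ ^ 2 ∂ℙ
          = α k ^ 2 * ∫ ω, ‖g k ω‖ ^ 2 ∂ℙ := integral_const_mul _ _
      rw [hpt, e1, e2, e3, e4]
    -- combine
    have hfin : ∫ ω, ‖x (k + 1) ω - x'‖ ^ 2 ∂ℙ
        ≤ (∫ ω, ‖x k ω - x'‖ ^ 2 ∂ℙ)
          - 2 * α k * (∫ ω, ⟪gradient f (x k ω), x k ω - x'⟫ ∂ℙ)
          + α k ^ 2 * (σ2 / b + ∫ ω, ‖gradient f (x k ω)‖ ^ 2 ∂ℙ) := by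
      rw [hexp, hA, hg2]
      nlinarith [sq_nonneg (α k), hvar]
    linarith [hfin]
  calc ∑ k ∈ Finset.range K, α k * ∫ ω, ⟪gradient f (x k ω), x k ω - x'⟫ ∂ℙ
      ≤ ∑ k ∈ Finset.range K,
          (1 / 2 * (α k ^ 2 * (σ2 / b + ∫ ω, ‖gradient f (x k ω)‖ ^ 2 ∂ℙ))
            + 1 / 2 * ((∫ ω, ‖x k ω - x'‖ ^ 2 ∂ℙ) - ∫ ω, ‖x (k + 1) ω - x'‖ ^ 2 ∂ℙ)) :=
        Finset.sum_le_sum fun k _ => key k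
    _ = (1 / 2) * ∑ k ∈ Finset.range K,
            α k ^ 2 * (σ2 / b + ∫ ω, ‖gradient f (x k ω)‖ ^ 2 ∂ℙ)
          + (1 / 2) * ((∫ ω, ‖x 0 ω - x'‖ ^ 2 ∂ℙ) - ∫ ω, ‖x K ω - x'‖ ^ 2 ∂ℙ) := by
        rw [Finset.sum_add_distrib, ← Finset.mul_sum, ← Finset.mul_sum,
          Finset.sum_range_sub' (fun k => ∫ ω, ‖x k ω - x'‖ ^ 2 ∂ℙ) K]
end

section
/- Suppose the step size is constant, α_k = α > 0 for all k, and that there is G > 0 with E[‖∇f(x_k)‖²] ≤ G² for all k. Then for every x ∈ H, liminf_{k→∞} V_k(x) ≤ (σ²/b + G²) · α/2. -/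
open MeasureTheory ProbabilityTheory Filter RealInnerProductSpace

section Aux

variable {Ω : Type*} {H : Type*} [NormedAddCommGroup H] [InnerProductSpace ℝ H] [CompleteSpace H]
  {m m0 : MeasurableSpace Ω} {μ : Measure Ω}

lemma my_condExpL2_ae_eq_condExp [IsFiniteMeasure μ] (hm : m ≤ m0) {g : Ω → H}
    (hg : MemLp g 2 μ) :
    (condExpL2 H ℝ hm (hg.toLp g) : Ω → H) =ᵐ[μ] condExp m μ g := by
  refine ae_eq_condExp_of_forall_setIntegral_eq hm (hg.integrable one_le_two)
    (fun s hs hμs => integrableOn_condExpL2_of_measure_ne_top hm hμs.ne _)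
    (fun s hs hμs => ?_) (aestronglyMeasurable_condExpL2 hm _)
  rw [integral_condExpL2_eq hm (hg.toLp g) hs hμs.ne]
  exact setIntegral_congr_ae (hm s hs) ((hg.coeFn_toLp).mono fun x hx _ => hx)

lemma my_integral_inner_condExp [IsProbabilityMeasure μ] (hm : m ≤ m0) {g h : Ω → H}
    (hg : MemLp g 2 μ) (hh : MemLp h 2 μ) (hhm : AEStronglyMeasurable[m] h μ) :
    ∫ ω, ⟪g ω, h ω⟫ ∂μ = ∫ ω, ⟪condExp m μ g ω, h ω⟫ ∂μ := by
  have h1 := inner_condExpL2_eq_inner_fun (𝕜 := ℝ) hm (hg.toLp g) (hh.toLp h)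
    (hhm.congr hh.coeFn_toLp.symm)
  rw [L2.inner_def, L2.inner_def] at h1
  have h2 : ∫ ω, ⟪(hg.toLp g : Ω → H) ω, (hh.toLp h : Ω → H) ω⟫ ∂μ = ∫ ω, ⟪g ω, h ω⟫ ∂μ := by
    refine integral_congr_ae ?_
    filter_upwards [hg.coeFn_toLp, hh.coeFn_toLp] with ω h3 h4
    rw [h3, h4]
  have h5 : ∫ ω, ⟪(condExpL2 H ℝ hm (hg.toLp g) : Ω → H) ω, (hh.toLp h : Ω → H) ω⟫ ∂μ
      = ∫ ω, ⟪condExp m μ g ω, h ω⟫ ∂μ := by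
    refine integral_congr_ae ?_
    filter_upwards [my_condExpL2_ae_eq_condExp hm hg, hh.coeFn_toLp] with ω h3 h4
    rw [h3, h4]
  rw [← h2, ← h1, h5]

lemma my_integrable_inner {g h : Ω → H} (hg : MemLp g 2 μ) (hh : MemLp h 2 μ) :
    Integrable (fun ω => ⟪g ω, h ω⟫) μ := by
  have := L2.integrable_inner (𝕜 := ℝ) (hg.toLp g) (hh.toLp h)
  refine this.congr ?_
  filter_upwards [hg.coeFn_toLp, hh.coeFn_toLp] with ω h1 h2
  rw [h1, h2]

end Aux

/-- Theorem 3 (first assertion) of the paper in the Euclidean/Hilbert setting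
(`ζ(κ,c) = 1`, so `C = 1/2`): for RSGD with constant step size `α > 0` and
`E[‖∇f(x_k)‖²] ≤ G²`, for every `x ∈ H`,
`liminf_{k→∞} V_k(x) ≤ (σ²/b + G²) · α/2`. -/
theorem rsgd_constant_step_vi_liminf
    {Ω : Type*} [MeasureSpace Ω] [IsProbabilityMeasure (ℙ : Measure Ω)]
    {H : Type*} [NormedAddCommGroup H] [InnerProductSpace ℝ H] [CompleteSpace H]
    (𝓕 : Filtration ℕ (inferInstance : MeasurableSpace Ω))
    (f : H → ℝ) (hf : ContDiff ℝ 1 f)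
    (x₀ : H) (α : ℕ → ℝ) (hα : ∀ k, 0 < α k)
    (b : ℕ) (hb : 1 ≤ b) (σ2 : ℝ) (hσ2 : 0 ≤ σ2)
    (g : ℕ → Ω → H)
    (hg_meas : ∀ k, StronglyMeasurable[𝓕 (k + 1)] (g k))
    (hg_L2 : ∀ k, MemLp (g k) 2 ℙ)
    (x : ℕ → Ω → H)
    (hx0 : x 0 = fun _ => x₀)
    (hxrec : ∀ k, x (k + 1) = fun ω => x k ω - α k • g k ω)
    (hx_meas : ∀ k, StronglyMeasurable[𝓕 k] (x k))
    (hg_mean : ∀ k, condExp (𝓕 k) ℙ (g k) =ᵐ[ℙ] fun ω => gradient f (x k ω))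
    (hg_var : ∀ k, ∀ᵐ ω ∂ℙ,
      condExp (𝓕 k) ℙ (fun ω' => ‖g k ω' - gradient f (x k ω')‖ ^ 2) ω ≤ σ2 / b)
    (hx_int : ∀ k, Integrable (fun ω => ‖x k ω‖ ^ 2) ℙ)
    (hgrad_int : ∀ k, Integrable (fun ω => ‖gradient f (x k ω)‖ ^ 2) ℙ)
    (a : ℝ) (ha : 0 < a) (hconst : ∀ k, α k = a)
    (G : ℝ) (hG : 0 < G)
    (hGbound : ∀ k, (∫ ω, ‖gradient f (x k ω)‖ ^ 2 ∂ℙ) ≤ G ^ 2) :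
    ∀ x' : H,
      liminf (fun k => ∫ ω, ⟪gradient f (x k ω), x k ω - x'⟫ ∂ℙ) atTop
        ≤ (σ2 / b + G ^ 2) * a / 2 := by
  intro x'
  -- notations
  set V : ℕ → ℝ := fun k => ∫ ω, ⟪gradient f (x k ω), x k ω - x'⟫ ∂ℙ with hV_def
  set D : ℕ → ℝ := fun k => ∫ ω, ‖x k ω - x'‖ ^ 2 ∂ℙ with hD_def
  set c : ℝ := σ2 / b + G ^ 2 with hc_def
  have hle : ∀ k, 𝓕 k ≤ (inferInstance : MeasurableSpace Ω) := fun k => 𝓕.le k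
  have hgradcont : Continuous (gradient f) := by
    have h1 : Continuous (fderiv ℝ f) := hf.continuous_fderiv one_ne_zero
    exact (InnerProductSpace.toDual ℝ H).symm.continuous.comp h1
  have hxm : ∀ k, AEStronglyMeasurable (x k) ℙ :=
    fun k => ((hx_meas k).mono (hle k)).aestronglyMeasurable
  have hx2 : ∀ k, MemLp (x k) 2 ℙ :=
    fun k => (memLp_two_iff_integrable_sq_norm (hxm k)).mpr (hx_int k)
  have hy2 : ∀ k, MemLp (fun ω => x k ω - x') 2 ℙ := fun k => (hx2 k).sub (memLp_const x')
  have hgrad_sm : ∀ k, StronglyMeasurable[𝓕 k] (fun ω => gradient f (x k ω)) :=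
    fun k => hgradcont.comp_stronglyMeasurable (hx_meas k)
  have hgrad2 : ∀ k, MemLp (fun ω => gradient f (x k ω)) 2 ℙ := fun k =>
    (memLp_two_iff_integrable_sq_norm
      ((hgrad_sm k).mono (hle k)).aestronglyMeasurable).mpr (hgrad_int k)
  have hD0 : ∀ k, 0 ≤ D k := fun k => integral_nonneg fun ω => sq_nonneg _
  have hgn2 : ∀ k, Integrable (fun ω => ‖g k ω‖ ^ 2) ℙ :=
    fun k => (memLp_two_iff_integrable_sq_norm (hg_L2 k).1).mp (hg_L2 k)
  have hcb : 0 ≤ σ2 / b := div_nonneg hσ2 (Nat.cast_nonneg b)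
  -- second moment bound for the stochastic gradient
  have hgsq : ∀ k, ∫ ω, ‖g k ω‖ ^ 2 ∂ℙ ≤ c := by
    intro k
    have he2 : MemLp (fun ω => g k ω - gradient f (x k ω)) 2 ℙ := (hg_L2 k).sub (hgrad2 k)
    have hesq_int : Integrable (fun ω => ‖g k ω - gradient f (x k ω)‖ ^ 2) ℙ :=
      (memLp_two_iff_integrable_sq_norm he2.1).mp he2
    have h1 : ∫ ω, ‖g k ω - gradient f (x k ω)‖ ^ 2 ∂ℙ ≤ σ2 / b := by
      rw [← integral_condExp (hle k) (f := fun ω => ‖g k ω - gradient f (x k ω)‖ ^ 2)]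
      calc ∫ ω, (condExp (𝓕 k) ℙ fun ω' => ‖g k ω' - gradient f (x k ω')‖ ^ 2) ω ∂ℙ
          ≤ ∫ _ω, σ2 / b ∂ℙ :=
            integral_mono_ae integrable_condExp (integrable_const _) (hg_var k)
        _ = σ2 / b := by simp
    have hcross : ∫ ω, ⟪g k ω - gradient f (x k ω), gradient f (x k ω)⟫ ∂ℙ = 0 := by
      rw [my_integral_inner_condExp (hle k) he2 (hgrad2 k) (hgrad_sm k).aestronglyMeasurable]
      have hcz : condExp (𝓕 k) ℙ (fun ω => g k ω - gradient f (x k ω)) =ᵐ[ℙ] 0 := by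
        have hsub := condExp_sub (μ := ℙ) (m := 𝓕 k) ((hg_L2 k).integrable one_le_two)
          ((hgrad2 k).integrable one_le_two)
        have hid : condExp (𝓕 k) ℙ (fun ω => gradient f (x k ω))
            = fun ω => gradient f (x k ω) :=
          condExp_of_stronglyMeasurable (hle k) (hgrad_sm k) ((hgrad2 k).integrable one_le_two)
        filter_upwards [hsub, hg_mean k] with ω h3 h4
        have : (fun ω => g k ω - gradient f (x k ω)) = g k - fun ω => gradient f (x k ω) := rfl
        rw [this, h3]
        simp only [Pi.sub_apply, h4, hid, Pi.zero_apply, sub_self]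
      calc ∫ ω, ⟪condExp (𝓕 k) ℙ (fun ω => g k ω - gradient f (x k ω)) ω,
              gradient f (x k ω)⟫ ∂ℙ
          = ∫ _ω, (0 : ℝ) ∂ℙ := by
            refine integral_congr_ae ?_
            filter_upwards [hcz] with ω hω
            rw [hω]
            simp
        _ = 0 := by simp
    have hpt : ∀ ω, ‖g k ω‖ ^ 2 = ‖g k ω - gradient f (x k ω)‖ ^ 2
        + 2 * ⟪g k ω - gradient f (x k ω), gradient f (x k ω)⟫
        + ‖gradient f (x k ω)‖ ^ 2 := by
      intro ω
      have := norm_add_sq_real (g k ω - gradient f (x k ω)) (gradient f (x k ω))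
      simpa using this
    have hint_cross : Integrable
        (fun ω => ⟪g k ω - gradient f (x k ω), gradient f (x k ω)⟫) ℙ :=
      my_integrable_inner he2 (hgrad2 k)
    have heq : ∫ ω, ‖g k ω‖ ^ 2 ∂ℙ
        = (∫ ω, ‖g k ω - gradient f (x k ω)‖ ^ 2 ∂ℙ)
          + 2 * (∫ ω, ⟪g k ω - gradient f (x k ω), gradient f (x k ω)⟫ ∂ℙ)
          + ∫ ω, ‖gradient f (x k ω)‖ ^ 2 ∂ℙ := by
      have hi2 : Integrable
          (fun ω => 2 * ⟪g k ω - gradient f (x k ω), gradient f (x k ω)⟫) ℙ :=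
        hint_cross.const_mul 2
      have hi12 : Integrable (fun ω => ‖g k ω - gradient f (x k ω)‖ ^ 2
          + 2 * ⟪g k ω - gradient f (x k ω), gradient f (x k ω)⟫) ℙ := hesq_int.add hi2
      rw [integral_congr_ae (Eventually.of_forall hpt), integral_add hi12 (hgrad_int k),
        integral_add hesq_int hi2, integral_const_mul]
    rw [heq, hcross]
    have := hGbound k
    rw [hc_def]
    linarith
  -- the drift identity for V
  have hVk : ∀ k, ∫ ω, ⟪g k ω, x k ω - x'⟫ ∂ℙ = V k := by
    intro k
    rw [my_integral_inner_condExp (hle k) (hg_L2 k) (hy2 k)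
      ((hx_meas k).sub stronglyMeasurable_const).aestronglyMeasurable]
    refine integral_congr_ae ?_
    filter_upwards [hg_mean k] with ω hω
    rw [hω]
  -- key one-step inequality
  have key : ∀ k, D (k + 1) ≤ D k - 2 * a * V k + a ^ 2 * c := by
    intro k
    have hpt : ∀ ω, ‖x (k + 1) ω - x'‖ ^ 2 = ‖x k ω - x'‖ ^ 2
        - 2 * a * ⟪g k ω, x k ω - x'⟫ + a ^ 2 * ‖g k ω‖ ^ 2 := by
      intro ω
      rw [hxrec k, hconst k]
      have h1 : x k ω - a • g k ω - x' = (x k ω - x') - a • g k ω := by abel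
      rw [h1, norm_sub_sq_real, real_inner_smul_right, real_inner_comm, norm_smul]
      simp only [Real.norm_eq_abs, mul_pow, sq_abs]
      ring
    have hexp : D (k + 1) = D k - 2 * a * (∫ ω, ⟪g k ω, x k ω - x'⟫ ∂ℙ)
        + a ^ 2 * ∫ ω, ‖g k ω‖ ^ 2 ∂ℙ := by
      have hyint : Integrable (fun ω => ‖x k ω - x'‖ ^ 2) ℙ :=
        (memLp_two_iff_integrable_sq_norm (hy2 k).1).mp (hy2 k)
      have hint_cross : Integrable (fun ω => ⟪g k ω, x k ω - x'⟫) ℙ :=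
        my_integrable_inner (hg_L2 k) (hy2 k)
      calc D (k + 1) = ∫ ω, (‖x k ω - x'‖ ^ 2 - 2 * a * ⟪g k ω, x k ω - x'⟫
              + a ^ 2 * ‖g k ω‖ ^ 2) ∂ℙ := integral_congr_ae (Eventually.of_forall hpt)
        _ = ∫ ω, (‖x k ω - x'‖ ^ 2 - 2 * a * ⟪g k ω, x k ω - x'⟫) ∂ℙ
              + a ^ 2 * ∫ ω, ‖g k ω‖ ^ 2 ∂ℙ := by
            have hi1 : Integrable
                (fun ω => ‖x k ω - x'‖ ^ 2 - 2 * a * ⟪g k ω, x k ω - x'⟫) ℙ :=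
              hyint.sub (hint_cross.const_mul (2 * a))
            have hi2 : Integrable (fun ω => a ^ 2 * ‖g k ω‖ ^ 2) ℙ :=
              (hgn2 k).const_mul (a ^ 2)
            rw [integral_add hi1 hi2, integral_const_mul]
        _ = D k - 2 * a * (∫ ω, ⟪g k ω, x k ω - x'⟫ ∂ℙ)
              + a ^ 2 * ∫ ω, ‖g k ω‖ ^ 2 ∂ℙ := by
            have hi3 : Integrable (fun ω => 2 * a * ⟪g k ω, x k ω - x'⟫) ℙ :=
              hint_cross.const_mul (2 * a)
            rw [integral_sub hyint hi3, integral_const_mul]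
    rw [hexp, hVk k]
    have := mul_le_mul_of_nonneg_left (hgsq k) (sq_nonneg a)
    linarith
  -- telescoping
  have htel : ∀ N n : ℕ, 2 * a * ∑ i ∈ Finset.range n, V (N + i)
      ≤ D N - D (N + n) + n * (a ^ 2 * c) := by
    intro N n
    induction n with
    | zero => simp
    | succ n ih =>
      rw [Finset.sum_range_succ, mul_add]
      have hk := key (N + n)
      have hNn : N + (n + 1) = N + n + 1 := by omega
      rw [hNn]
      push_cast
      linarith
  -- conclusion
  have hBpos : 0 < c * a / 2 := by
    have : 0 < c := by rw [hc_def]; positivity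
    positivity
  have hgoal : (σ2 / b + G ^ 2) * a / 2 = c * a / 2 := by rw [hc_def]
  rw [hgoal, liminf_eq]
  refine Real.sSup_le (fun r hr => ?_) hBpos.le
  simp only [Set.mem_setOf_eq] at hr
  by_contra hlt
  push_neg at hlt
  obtain ⟨N, hN⟩ := eventually_atTop.mp hr
  have hsum_lb : ∀ n : ℕ, (n : ℝ) * r ≤ ∑ i ∈ Finset.range n, V (N + i) := by
    intro n
    calc (n : ℝ) * r = ∑ _i ∈ Finset.range n, r := by
          rw [Finset.sum_const, Finset.card_range, nsmul_eq_mul]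
      _ ≤ ∑ i ∈ Finset.range n, V (N + i) :=
          Finset.sum_le_sum fun i _ => hN (N + i) (Nat.le_add_right N i)
  have hbdd : ∀ n : ℕ, (n : ℝ) * (2 * a * (r - c * a / 2)) ≤ D N := by
    intro n
    have h1 := htel N n
    have h2 := mul_le_mul_of_nonneg_left (hsum_lb n) (by positivity : (0 : ℝ) ≤ 2 * a)
    have h3 := hD0 (N + n)
    have e1 : (n : ℝ) * (2 * a * (r - c * a / 2)) = 2 * a * ((n : ℝ) * r)
        - (n : ℝ) * (a ^ 2 * c) := by ring
    rw [e1]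
    linarith
  have hpos2 : 0 < 2 * a * (r - c * a / 2) := by
    have : 0 < r - c * a / 2 := by linarith
    positivity
  obtain ⟨n, hn⟩ := exists_nat_gt (D N / (2 * a * (r - c * a / 2)))
  have h4 : D N < (n : ℝ) * (2 * a * (r - c * a / 2)) := by
    rw [div_lt_iff₀ hpos2] at hn
    linarith
  exact absurd (hbdd n) (not_le.mpr h4)
end

section
/- Suppose the step size is constant, α_k = α > 0 for all k, and that there is G > 0 with E[‖∇f(x_k)‖²] ≤ G² for all k. Then for every integer K ≥ 1 and every x ∈ H, (1/K) ∑_{k=0}^{K−1} V_k(x) ≤ (σ²/b + G²) · α/2 + ‖x_0 − x‖² / (2αK). -/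
open MeasureTheory ProbabilityTheory Filter RealInnerProductSpace

section Aux

variable {Ω : Type*} {m m0 : MeasurableSpace Ω} {μ : Measure Ω} [IsFiniteMeasure μ]
  {H : Type*} [NormedAddCommGroup H] [InnerProductSpace ℝ H] [CompleteSpace H]

/-- For `Y ∈ L²`, `condexpL2` of `Y` agrees a.e. with `condexp`. -/
lemma condExpL2_ae_eq_condexp' (hm : m ≤ m0) {Y : Ω → H} (hY : MemLp Y 2 μ) :
    (condExpL2 H ℝ hm (hY.toLp Y) : Ω → H) =ᵐ[μ] μ[Y|m] := by
  refine ae_eq_condExp_of_forall_setIntegral_eq hm (hY.integrable one_le_two)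
    (fun s _ hμs => integrableOn_Lp_of_measure_ne_top _ fact_one_le_two_ennreal.elim hμs.ne)
    (fun s hs hμs => ?_) (aestronglyMeasurable_condExpL2 hm _)
  rw [integral_condExpL2_eq hm (hY.toLp Y) hs hμs.ne]
  exact setIntegral_congr_ae (hm s hs) ((hY.coeFn_toLp).mono fun ω hω _ => hω)

/-- Tower property for inner products. -/
lemma integral_inner_condExp (hm : m ≤ m0) {Y h : Ω → H} (hY : MemLp Y 2 μ)
    (hh : MemLp h 2 μ) (hhm : AEStronglyMeasurable[m] h μ) :
    ∫ ω, ⟪Y ω, h ω⟫ ∂μ = ∫ ω, ⟪(μ[Y|m]) ω, h ω⟫ ∂μ := by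
  have h1 : ∫ ω, ⟪Y ω, h ω⟫ ∂μ = ⟪hY.toLp Y, hh.toLp h⟫ := by
    rw [L2.inner_def]
    refine integral_congr_ae ?_
    filter_upwards [hY.coeFn_toLp, hh.coeFn_toLp] with ω h1 h2
    rw [h1, h2]
  have h2 : ⟪hY.toLp Y, hh.toLp h⟫
      = ⟪(condExpL2 H ℝ hm (hY.toLp Y) : Ω →₂[μ] H), hh.toLp h⟫ := by
    rw [inner_condExpL2_eq_inner_fun hm _ _ (hhm.congr hh.coeFn_toLp.symm)]
  rw [h1, h2, L2.inner_def]
  refine integral_congr_ae ?_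
  filter_upwards [condExpL2_ae_eq_condexp' hm hY, hh.coeFn_toLp] with ω h1 h2
  rw [h1, h2]

/-- Pointwise inner product of two `L²` functions is integrable. -/
lemma integrable_inner_of_memL2_s8 {Y h : Ω → H} (hY : MemLp Y 2 μ) (hh : MemLp h 2 μ) :
    Integrable (fun ω => ⟪Y ω, h ω⟫) μ := by
  refine (L2.integrable_inner (𝕜 := ℝ) (hY.toLp Y) (hh.toLp h)).congr ?_
  filter_upwards [hY.coeFn_toLp, hh.coeFn_toLp] with ω h1 h2
  rw [h1, h2]

end Aux

/-- Theorem 3 (second assertion) of the paper in the Euclidean/Hilbert setting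
(`ζ(κ,c) = 1`, so `C₁ = 1/2` and `C₂ = ‖x₀ − x‖²/(2α)`): for RSGD with constant
step size `α > 0` and `E[‖∇f(x_k)‖²] ≤ G²`, for every `K ≥ 1` and `x ∈ H`,
`(1/K) ∑_{k<K} V_k(x) ≤ (σ²/b + G²) · α/2 + ‖x₀ − x‖²/(2αK)`. -/
theorem rsgd_constant_step_vi_sum_bound
    {Ω : Type*} [MeasureSpace Ω] [IsProbabilityMeasure (ℙ : Measure Ω)]
    {H : Type*} [NormedAddCommGroup H] [InnerProductSpace ℝ H] [CompleteSpace H]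
    (𝓕 : Filtration ℕ (inferInstance : MeasurableSpace Ω))
    (f : H → ℝ) (hf : ContDiff ℝ 1 f)
    (x₀ : H) (α : ℕ → ℝ) (hα : ∀ k, 0 < α k)
    (b : ℕ) (hb : 1 ≤ b) (σ2 : ℝ) (hσ2 : 0 ≤ σ2)
    (g : ℕ → Ω → H)
    (hg_meas : ∀ k, StronglyMeasurable[𝓕 (k + 1)] (g k))
    (hg_L2 : ∀ k, MemLp (g k) 2 ℙ)
    (x : ℕ → Ω → H)
    (hx0 : x 0 = fun _ => x₀)
    (hxrec : ∀ k, x (k + 1) = fun ω => x k ω - α k • g k ω)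
    (hx_meas : ∀ k, StronglyMeasurable[𝓕 k] (x k))
    (hg_mean : ∀ k, condExp (𝓕 k) ℙ (g k) =ᵐ[ℙ] fun ω => gradient f (x k ω))
    (hg_var : ∀ k, ∀ᵐ ω ∂ℙ,
      condExp (𝓕 k) ℙ (fun ω' => ‖g k ω' - gradient f (x k ω')‖ ^ 2) ω ≤ σ2 / b)
    (hx_int : ∀ k, Integrable (fun ω => ‖x k ω‖ ^ 2) ℙ)
    (hgrad_int : ∀ k, Integrable (fun ω => ‖gradient f (x k ω)‖ ^ 2) ℙ)
    (a : ℝ) (ha : 0 < a) (hconst : ∀ k, α k = a)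
    (G : ℝ) (hG : 0 < G)
    (hGbound : ∀ k, (∫ ω, ‖gradient f (x k ω)‖ ^ 2 ∂ℙ) ≤ G ^ 2) :
    ∀ K : ℕ, 1 ≤ K → ∀ x' : H,
      (1 / (K : ℝ)) * ∑ k ∈ Finset.range K,
          ∫ ω, ⟪gradient f (x k ω), x k ω - x'⟫ ∂ℙ
        ≤ (σ2 / b + G ^ 2) * a / 2 + ‖x₀ - x'‖ ^ 2 / (2 * a * K) := by
  intro K hK x'
  -- continuity of the gradient
  have hgc : Continuous (gradient f) := by
    have : Continuous (fderiv ℝ f) := hf.continuous_fderiv one_ne_zero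
    exact (LinearIsometryEquiv.continuous _).comp this
  have hd_meas : ∀ k, StronglyMeasurable[𝓕 k] (fun ω => gradient f (x k ω)) :=
    fun k => hgc.comp_stronglyMeasurable (hx_meas k)
  have hd_L2 : ∀ k, MemLp (fun ω => gradient f (x k ω)) 2 ℙ := fun k =>
    (memLp_two_iff_integrable_sq_norm
      ((hd_meas k).mono (𝓕.le k)).aestronglyMeasurable).mpr (hgrad_int k)
  have hx_L2 : ∀ k, MemLp (x k) 2 ℙ := fun k =>
    (memLp_two_iff_integrable_sq_norm
      ((hx_meas k).mono (𝓕.le k)).aestronglyMeasurable).mpr (hx_int k)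
  have hu_L2 : ∀ k, MemLp (fun ω => x k ω - x') 2 ℙ := fun k =>
    (hx_L2 k).sub (memLp_const x')
  have hu_meas : ∀ k, StronglyMeasurable[𝓕 k] (fun ω => x k ω - x') :=
    fun k => (hx_meas k).sub stronglyMeasurable_const
  have hIu : ∀ k, Integrable (fun ω => ‖x k ω - x'‖ ^ 2) ℙ := fun k =>
    (memLp_two_iff_integrable_sq_norm (hu_L2 k).aestronglyMeasurable).mp (hu_L2 k)
  have hIg2 : ∀ k, Integrable (fun ω => ‖g k ω‖ ^ 2) ℙ := fun k =>
    (memLp_two_iff_integrable_sq_norm (hg_L2 k).aestronglyMeasurable).mp (hg_L2 k)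
  set C : ℝ := σ2 / b + G ^ 2 with hC
  set A : ℕ → ℝ := fun k => ∫ ω, ‖x k ω - x'‖ ^ 2 ∂ℙ with hA
  set V : ℕ → ℝ := fun k => ∫ ω, ⟪gradient f (x k ω), x k ω - x'⟫ ∂ℙ with hV
  set S : ℕ → ℝ := fun k => ∫ ω, ‖g k ω‖ ^ 2 ∂ℙ with hS
  -- the expectation of ⟪g, x - x'⟫ equals V by the tower property
  have hVg : ∀ k, (∫ ω, ⟪g k ω, x k ω - x'⟫ ∂ℙ) = V k := by
    intro k
    rw [integral_inner_condExp (𝓕.le k) (hg_L2 k) (hu_L2 k)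
      (hu_meas k).aestronglyMeasurable]
    refine integral_congr_ae ?_
    filter_upwards [hg_mean k] with ω hω
    rw [hω]
  -- the one-step expansion
  have step : ∀ k, A (k + 1) = A k - 2 * a * V k + a ^ 2 * S k := by
    intro k
    have hpt : ∀ ω, ‖x (k+1) ω - x'‖ ^ 2
        = ‖x k ω - x'‖ ^ 2 - 2 * a * ⟪g k ω, x k ω - x'⟫ + a ^ 2 * ‖g k ω‖ ^ 2 := by
      intro ω
      rw [hxrec k]
      simp only [hconst k]
      have h1 : x k ω - a • g k ω - x' = (x k ω - x') - a • g k ω := by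
        rw [sub_right_comm]
      rw [h1, norm_sub_sq_real, real_inner_smul_right, norm_smul, real_inner_comm,
        mul_pow, Real.norm_eq_abs, sq_abs]
      ring
    have I1 : Integrable (fun ω => 2 * a * ⟪g k ω, x k ω - x'⟫) ℙ :=
      (integrable_inner_of_memL2_s8 (hg_L2 k) (hu_L2 k)).const_mul (2 * a)
    have I2 : Integrable (fun ω => ‖x k ω - x'‖ ^ 2 - 2 * a * ⟪g k ω, x k ω - x'⟫) ℙ :=
      (hIu k).sub I1
    have I3 : Integrable (fun ω => a ^ 2 * ‖g k ω‖ ^ 2) ℙ := (hIg2 k).const_mul (a ^ 2)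
    have h2 : A (k + 1) = ∫ ω, (‖x k ω - x'‖ ^ 2 - 2 * a * ⟪g k ω, x k ω - x'⟫
        + a ^ 2 * ‖g k ω‖ ^ 2) ∂ℙ := by
      rw [hA]
      exact integral_congr_ae (Eventually.of_forall hpt)
    rw [h2, integral_add I2 I3, integral_sub (hIu k) I1,
      integral_const_mul, integral_const_mul, hVg k]
  -- bound on the second moment of the stochastic gradient
  have hSbound : ∀ k, S k ≤ C := by
    intro k
    have he_L2 : MemLp (fun ω => g k ω - gradient f (x k ω)) 2 ℙ :=
      (hg_L2 k).sub (hd_L2 k)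
    have hIe2 : Integrable (fun ω => ‖g k ω - gradient f (x k ω)‖ ^ 2) ℙ :=
      (memLp_two_iff_integrable_sq_norm he_L2.aestronglyMeasurable).mp he_L2
    -- cross term vanishes
    have hcross : (∫ ω, ⟪g k ω - gradient f (x k ω), gradient f (x k ω)⟫ ∂ℙ) = 0 := by
      rw [integral_inner_condExp (𝓕.le k) he_L2 (hd_L2 k)
        (hd_meas k).aestronglyMeasurable]
      have hce : condExp (𝓕 k) ℙ (fun ω => g k ω - gradient f (x k ω)) =ᵐ[ℙ] 0 := by
        have h1 : condExp (𝓕 k) ℙ (fun ω => g k ω - gradient f (x k ω)) =ᵐ[ℙ]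
            condExp (𝓕 k) ℙ (g k) - condExp (𝓕 k) ℙ (fun ω => gradient f (x k ω)) :=
          condExp_sub ((hg_L2 k).integrable one_le_two) ((hd_L2 k).integrable one_le_two) (𝓕 k)
        have h2 : condExp (𝓕 k) ℙ (fun ω => gradient f (x k ω))
            = fun ω => gradient f (x k ω) :=
          condExp_of_stronglyMeasurable (𝓕.le k) (hd_meas k)
            ((hd_L2 k).integrable one_le_two)
        calc condExp (𝓕 k) ℙ (fun ω => g k ω - gradient f (x k ω))
            =ᵐ[ℙ] condExp (𝓕 k) ℙ (g k) - condExp (𝓕 k) ℙ (fun ω => gradient f (x k ω)) :=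
              h1
          _ =ᵐ[ℙ] 0 := by
              filter_upwards [hg_mean k] with ω hω
              simp [h2, hω]
      have h3 : (∫ ω, ⟪(condExp (𝓕 k) ℙ (fun ω' => g k ω' - gradient f (x k ω'))) ω,
          gradient f (x k ω)⟫ ∂ℙ) = ∫ (_ω : Ω), (0 : ℝ) ∂ℙ := by
        refine integral_congr_ae ?_
        filter_upwards [hce] with ω hω
        simp [hω]
      rw [h3, integral_zero]
    -- variance term
    have hvar : (∫ ω, ‖g k ω - gradient f (x k ω)‖ ^ 2 ∂ℙ) ≤ σ2 / b := by
      have h0 : (∫ ω, ‖g k ω - gradient f (x k ω)‖ ^ 2 ∂ℙ)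
          = ∫ ω, (condExp (𝓕 k) ℙ (fun ω' => ‖g k ω' - gradient f (x k ω')‖ ^ 2)) ω ∂ℙ :=
        (integral_condExp (𝓕.le k)).symm
      rw [h0]
      calc (∫ ω, (condExp (𝓕 k) ℙ (fun ω' => ‖g k ω' - gradient f (x k ω')‖ ^ 2)) ω ∂ℙ)
          ≤ ∫ (_ω : Ω), σ2 / b ∂ℙ :=
            integral_mono_ae integrable_condExp (integrable_const _) (hg_var k)
        _ = σ2 / b := by simp
    -- decomposition of ‖g‖²
    have hpt : ∀ ω, ‖g k ω‖ ^ 2 = ‖g k ω - gradient f (x k ω)‖ ^ 2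
        + 2 * ⟪g k ω - gradient f (x k ω), gradient f (x k ω)⟫
        + ‖gradient f (x k ω)‖ ^ 2 := by
      intro ω
      have h4 : g k ω = (g k ω - gradient f (x k ω)) + gradient f (x k ω) := by abel
      rw [h4, norm_add_sq_real]
      simp
    have I1 : Integrable (fun ω => 2 * ⟪g k ω - gradient f (x k ω), gradient f (x k ω)⟫) ℙ :=
      (integrable_inner_of_memL2_s8 he_L2 (hd_L2 k)).const_mul 2
    have I2 : Integrable (fun ω => ‖g k ω - gradient f (x k ω)‖ ^ 2
        + 2 * ⟪g k ω - gradient f (x k ω), gradient f (x k ω)⟫) ℙ := hIe2.add I1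
    have hdecomp : S k = (∫ ω, ‖g k ω - gradient f (x k ω)‖ ^ 2 ∂ℙ)
        + 2 * (∫ ω, ⟪g k ω - gradient f (x k ω), gradient f (x k ω)⟫ ∂ℙ)
        + ∫ ω, ‖gradient f (x k ω)‖ ^ 2 ∂ℙ := by
      have h5 : S k = ∫ ω, (‖g k ω - gradient f (x k ω)‖ ^ 2
          + 2 * ⟪g k ω - gradient f (x k ω), gradient f (x k ω)⟫
          + ‖gradient f (x k ω)‖ ^ 2) ∂ℙ := by
        rw [hS]
        exact integral_congr_ae (Eventually.of_forall hpt)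
      rw [h5, integral_add I2 (hgrad_int k), integral_add hIe2 I1, integral_const_mul]
    rw [hdecomp, hcross, hC]
    have h6 := hGbound k
    linarith
  -- per-step inequality and telescoping sum
  have key : ∀ k, 2 * a * V k ≤ A k - A (k + 1) + a ^ 2 * C := by
    intro k
    have h7 := step k
    nlinarith [hSbound k, sq_nonneg a]
  have hsum : 2 * a * (∑ k ∈ Finset.range K, V k) ≤ A 0 - A K + K * (a ^ 2 * C) := by
    calc 2 * a * (∑ k ∈ Finset.range K, V k)
        = ∑ k ∈ Finset.range K, (2 * a * V k) := by rw [Finset.mul_sum]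
      _ ≤ ∑ k ∈ Finset.range K, (A k - A (k + 1) + a ^ 2 * C) :=
          Finset.sum_le_sum fun k _ => key k
      _ = (∑ k ∈ Finset.range K, (A k - A (k + 1))) + K * (a ^ 2 * C) := by
          rw [Finset.sum_add_distrib, Finset.sum_const, Finset.card_range, nsmul_eq_mul]
      _ = A 0 - A K + K * (a ^ 2 * C) := by rw [Finset.sum_range_sub' A K]
  have hA0 : A 0 = ‖x₀ - x'‖ ^ 2 := by
    simp [hA, hx0]
  have hAK : 0 ≤ A K := integral_nonneg fun ω => by positivity
  have hKpos : (0 : ℝ) < K := by exact_mod_cast hK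
  have hmain : 2 * a * (∑ k ∈ Finset.range K, V k) ≤ ‖x₀ - x'‖ ^ 2 + K * (a ^ 2 * C) := by
    rw [← hA0]; linarith
  have h2aK : (0 : ℝ) < 2 * a * K := by positivity
  have hfinal : (1 / (K : ℝ)) * ∑ k ∈ Finset.range K, V k
      ≤ C * a / 2 + ‖x₀ - x'‖ ^ 2 / (2 * a * K) := by
    calc (1 / (K : ℝ)) * ∑ k ∈ Finset.range K, V k
        = (2 * a * (∑ k ∈ Finset.range K, V k)) / (2 * a * K) := by
          field_simp
      _ ≤ (‖x₀ - x'‖ ^ 2 + K * (a ^ 2 * C)) / (2 * a * K) :=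
          (div_le_div_iff_of_pos_right h2aK).mpr hmain
      _ = C * a / 2 + ‖x₀ - x'‖ ^ 2 / (2 * a * K) := by
          field_simp
          ring
  simpa only [hV, hC] using hfinal
end

section
/- Suppose the step sizes satisfy ∑_{k=0}^{∞} α_k = +∞ and ∑_{k=0}^{∞} α_k² < +∞, and that there is G > 0 with E[‖∇f(x_k)‖²] ≤ G² for all k. Then for every x ∈ H, liminf_{k→∞} V_k(x) ≤ 0. -/
open MeasureTheory ProbabilityTheory Filter RealInnerProductSpace

section RSGDAux

variable {α : Type*} {m m0 : MeasurableSpace α} {μ : Measure α}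
  {E : Type*} [NormedAddCommGroup E] [InnerProductSpace ℝ E] [CompleteSpace E]

lemma memLp_two_integrable_inner {f g : α → E} (hf : MemLp f 2 μ) (hg : MemLp g 2 μ) :
    Integrable (fun a => ⟪f a, g a⟫) μ := by
  have h := L2.integrable_inner (𝕜 := ℝ) (hf.toLp f) (hg.toLp g)
  refine h.congr ?_
  filter_upwards [hf.coeFn_toLp, hg.coeFn_toLp] with a h1 h2
  rw [h1, h2]

lemma condExpL2_ae_eq_condExp' [IsFiniteMeasure μ] (hm : m ≤ m0) {f : α → E}
    (hf : MemLp f 2 μ) :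
    (condExpL2 E ℝ hm (hf.toLp f) : α →₂[μ] E) =ᵐ[μ] condExp m μ f := by
  refine ae_eq_condExp_of_forall_setIntegral_eq hm (hf.integrable one_le_two)
    (fun s _ hμs => integrableOn_condExpL2_of_measure_ne_top hm hμs.ne _) ?_
    (aestronglyMeasurable_condExpL2 hm _)
  intro s hs hμs
  rw [integral_condExpL2_eq hm (hf.toLp f) hs hμs.ne]
  exact setIntegral_congr_ae (hm s hs) (hf.coeFn_toLp.mono fun a ha _ => ha)

lemma integral_inner_condExp' [IsFiniteMeasure μ] (hm : m ≤ m0) {f h : α → E}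
    (hf : MemLp f 2 μ) (hh : MemLp h 2 μ) (hhm : AEStronglyMeasurable[m] h μ) :
    ∫ a, ⟪f a, h a⟫ ∂μ = ∫ a, ⟪(condExp m μ f) a, h a⟫ ∂μ := by
  have e1 : ∫ a, ⟪f a, h a⟫ ∂μ = ⟪hf.toLp f, hh.toLp h⟫ := by
    rw [L2.inner_def]
    refine integral_congr_ae ?_
    filter_upwards [hf.coeFn_toLp, hh.coeFn_toLp] with a h1 h2
    rw [h1, h2]
  have hHm : AEStronglyMeasurable[m] (hh.toLp h : α →₂[μ] E) μ :=
    hhm.congr hh.coeFn_toLp.symm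
  have e2 := inner_condExpL2_eq_inner_fun (E := E) (𝕜 := ℝ) hm (hf.toLp f) (hh.toLp h) hHm
  rw [e1, ← e2, L2.inner_def]
  refine integral_congr_ae ?_
  filter_upwards [condExpL2_ae_eq_condExp' hm hf, hh.coeFn_toLp] with a h1 h2
  rw [h1, h2]

end RSGDAux

/-- Theorem 4 (first assertion) of the paper in the Euclidean/Hilbert setting:
for RSGD with diminishing step sizes (`∑ α_k = ∞`, `∑ α_k² < ∞`) and
`E[‖∇f(x_k)‖²] ≤ G²`, for every `x ∈ H`, `liminf_{k→∞} V_k(x) ≤ 0`. -/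
theorem rsgd_diminishing_step_vi_liminf
    {Ω : Type*} [MeasureSpace Ω] [IsProbabilityMeasure (ℙ : Measure Ω)]
    {H : Type*} [NormedAddCommGroup H] [InnerProductSpace ℝ H] [CompleteSpace H]
    (𝓕 : Filtration ℕ (inferInstance : MeasurableSpace Ω))
    (f : H → ℝ) (hf : ContDiff ℝ 1 f)
    (x₀ : H) (α : ℕ → ℝ) (hα : ∀ k, 0 < α k)
    (b : ℕ) (hb : 1 ≤ b) (σ2 : ℝ) (hσ2 : 0 ≤ σ2)
    (g : ℕ → Ω → H)
    (hg_meas : ∀ k, StronglyMeasurable[𝓕 (k + 1)] (g k))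
    (hg_L2 : ∀ k, MemLp (g k) 2 ℙ)
    (x : ℕ → Ω → H)
    (hx0 : x 0 = fun _ => x₀)
    (hxrec : ∀ k, x (k + 1) = fun ω => x k ω - α k • g k ω)
    (hx_meas : ∀ k, StronglyMeasurable[𝓕 k] (x k))
    (hg_mean : ∀ k, condExp (𝓕 k) ℙ (g k) =ᵐ[ℙ] fun ω => gradient f (x k ω))
    (hg_var : ∀ k, ∀ᵐ ω ∂ℙ,
      condExp (𝓕 k) ℙ (fun ω' => ‖g k ω' - gradient f (x k ω')‖ ^ 2) ω ≤ σ2 / b)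
    (hx_int : ∀ k, Integrable (fun ω => ‖x k ω‖ ^ 2) ℙ)
    (hgrad_int : ∀ k, Integrable (fun ω => ‖gradient f (x k ω)‖ ^ 2) ℙ)
    (hdiv : Tendsto (fun K => ∑ k ∈ Finset.range K, α k) atTop atTop)
    (hsum : Summable (fun k => α k ^ 2))
    (G : ℝ) (hG : 0 < G)
    (hGbound : ∀ k, (∫ ω, ‖gradient f (x k ω)‖ ^ 2 ∂ℙ) ≤ G ^ 2) :
    ∀ x' : H,
      liminf (fun k => ∫ ω, ⟪gradient f (x k ω), x k ω - x'⟫ ∂ℙ) atTop ≤ 0 := by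
  intro x'
  -- basic measurability / integrability facts
  have hgrad_cont : Continuous (gradient f) := by
    have h1 : Continuous (fderiv ℝ f) := hf.continuous_fderiv one_ne_zero
    exact (InnerProductSpace.toDual ℝ H).symm.continuous.comp h1
  have hx_sm : ∀ k, StronglyMeasurable (x k) := fun k => (hx_meas k).mono (𝓕.le k)
  have hxL2 : ∀ k, MemLp (x k) 2 ℙ := fun k =>
    (memLp_two_iff_integrable_sq_norm (hx_sm k).aestronglyMeasurable).2 (hx_int k)
  have hhL2 : ∀ k, MemLp (fun ω => x k ω - x') 2 ℙ := fun k =>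
    (hxL2 k).sub (memLp_const x')
  have hgrad_sm : ∀ k, StronglyMeasurable[𝓕 k] (fun ω => gradient f (x k ω)) := fun k =>
    hgrad_cont.comp_stronglyMeasurable (hx_meas k)
  have hgradL2 : ∀ k, MemLp (fun ω => gradient f (x k ω)) 2 ℙ := fun k =>
    (memLp_two_iff_integrable_sq_norm
      ((hgrad_sm k).mono (𝓕.le k)).aestronglyMeasurable).2 (hgrad_int k)
  have hdiffL2 : ∀ k, MemLp (fun ω => g k ω - gradient f (x k ω)) 2 ℙ := fun k =>
    (hg_L2 k).sub (hgradL2 k)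
  have hg2int : ∀ k, Integrable (fun ω => ‖g k ω‖ ^ 2) ℙ := fun k =>
    (memLp_two_iff_integrable_sq_norm (hg_L2 k).aestronglyMeasurable).1 (hg_L2 k)
  have hh2int : ∀ k, Integrable (fun ω => ‖x k ω - x'‖ ^ 2) ℙ := fun k =>
    (memLp_two_iff_integrable_sq_norm (hhL2 k).aestronglyMeasurable).1 (hhL2 k)
  have hdiff2int : ∀ k, Integrable (fun ω => ‖g k ω - gradient f (x k ω)‖ ^ 2) ℙ := fun k =>
    (memLp_two_iff_integrable_sq_norm (hdiffL2 k).aestronglyMeasurable).1 (hdiffL2 k)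
  have hinner_int : ∀ k, Integrable (fun ω => ⟪g k ω, x k ω - x'⟫) ℙ := fun k =>
    memLp_two_integrable_inner (hg_L2 k) (hhL2 k)
  -- the tower identity
  set V : ℕ → ℝ := fun k => ∫ ω, ⟪gradient f (x k ω), x k ω - x'⟫ ∂ℙ with hV
  have key : ∀ k, ∫ ω, ⟪g k ω, x k ω - x'⟫ ∂ℙ = V k := by
    intro k
    have hhm : AEStronglyMeasurable[𝓕 k] (fun ω => x k ω - x') ℙ :=
      ((hx_meas k).sub stronglyMeasurable_const).aestronglyMeasurable
    rw [integral_inner_condExp' (𝓕.le k) (hg_L2 k) (hhL2 k) hhm]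
    refine integral_congr_ae ?_
    filter_upwards [hg_mean k] with ω hω
    rw [hω]
  -- variance bound
  have hvar : ∀ k, ∫ ω, ‖g k ω - gradient f (x k ω)‖ ^ 2 ∂ℙ ≤ σ2 / b := by
    intro k
    rw [← integral_condExp (𝓕.le k) (μ := ℙ)
      (f := fun ω => ‖g k ω - gradient f (x k ω)‖ ^ 2)]
    calc ∫ ω, (condExp (𝓕 k) ℙ (fun ω' => ‖g k ω' - gradient f (x k ω')‖ ^ 2)) ω ∂ℙ
        ≤ ∫ _ω, σ2 / b ∂ℙ :=
          integral_mono_ae integrable_condExp (integrable_const _) (hg_var k)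
      _ = σ2 / b := by simp
  -- second moment bound
  set C : ℝ := 2 * (σ2 / b) + 2 * G ^ 2 with hC
  have hCpos : 0 ≤ C := by
    have : (0 : ℝ) ≤ σ2 / b := div_nonneg hσ2 (Nat.cast_nonneg b)
    positivity
  have hg2 : ∀ k, ∫ ω, ‖g k ω‖ ^ 2 ∂ℙ ≤ C := by
    intro k
    have hpt : ∀ ω, ‖g k ω‖ ^ 2 ≤
        2 * ‖g k ω - gradient f (x k ω)‖ ^ 2 + 2 * ‖gradient f (x k ω)‖ ^ 2 := by
      intro ω
      have h1 : ‖g k ω‖ ≤ ‖g k ω - gradient f (x k ω)‖ + ‖gradient f (x k ω)‖ := by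
        simpa using norm_add_le (g k ω - gradient f (x k ω)) (gradient f (x k ω))
      nlinarith [norm_nonneg (g k ω), norm_nonneg (g k ω - gradient f (x k ω)),
        norm_nonneg (gradient f (x k ω)),
        sq_nonneg (‖g k ω - gradient f (x k ω)‖ - ‖gradient f (x k ω)‖)]
    have hint2 : Integrable (fun ω => 2 * ‖g k ω - gradient f (x k ω)‖ ^ 2
        + 2 * ‖gradient f (x k ω)‖ ^ 2) ℙ :=
      ((hdiff2int k).const_mul 2).add ((hgrad_int k).const_mul 2)
    calc ∫ ω, ‖g k ω‖ ^ 2 ∂ℙ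
        ≤ ∫ ω, (2 * ‖g k ω - gradient f (x k ω)‖ ^ 2 + 2 * ‖gradient f (x k ω)‖ ^ 2) ∂ℙ :=
          integral_mono (hg2int k) hint2 hpt
      _ = 2 * (∫ ω, ‖g k ω - gradient f (x k ω)‖ ^ 2 ∂ℙ)
          + 2 * (∫ ω, ‖gradient f (x k ω)‖ ^ 2 ∂ℙ) := by
          rw [integral_add ((hdiff2int k).const_mul 2) ((hgrad_int k).const_mul 2),
            integral_const_mul, integral_const_mul]
      _ ≤ C := by
          have := hvar k
          have := hGbound k
          rw [hC]; linarith
  -- one-step recursion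
  set a : ℕ → ℝ := fun k => ∫ ω, ‖x k ω - x'‖ ^ 2 ∂ℙ with ha
  have ha_nonneg : ∀ k, 0 ≤ a k := fun k => integral_nonneg fun ω => sq_nonneg _
  have hrec : ∀ k, a (k + 1) = a k - 2 * α k * (∫ ω, ⟪g k ω, x k ω - x'⟫ ∂ℙ)
      + α k ^ 2 * ∫ ω, ‖g k ω‖ ^ 2 ∂ℙ := by
    intro k
    have hpt : ∀ ω, ‖x (k + 1) ω - x'‖ ^ 2 =
        ‖x k ω - x'‖ ^ 2 - 2 * α k * ⟪g k ω, x k ω - x'⟫ + α k ^ 2 * ‖g k ω‖ ^ 2 := by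
      intro ω
      have hx1 : x (k + 1) ω = x k ω - α k • g k ω := by rw [hxrec k]
      have hre : x (k + 1) ω - x' = (x k ω - x') - α k • g k ω := by
        rw [hx1]; abel
      rw [hre, norm_sub_sq_real, real_inner_smul_right, norm_smul, Real.norm_eq_abs,
        mul_pow, sq_abs, real_inner_comm]
      ring
    have : a (k + 1) = ∫ ω, (‖x k ω - x'‖ ^ 2 - 2 * α k * ⟪g k ω, x k ω - x'⟫
        + α k ^ 2 * ‖g k ω‖ ^ 2) ∂ℙ := by
      rw [ha]; exact integral_congr_ae (Eventually.of_forall hpt)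
    have i2 : Integrable (fun ω => α k ^ 2 * ‖g k ω‖ ^ 2) ℙ := (hg2int k).const_mul _
    have i0 : Integrable (fun ω => 2 * α k * ⟪g k ω, x k ω - x'⟫) ℙ :=
      (hinner_int k).const_mul _
    have i1 : Integrable
        (fun ω => ‖x k ω - x'‖ ^ 2 - 2 * α k * ⟪g k ω, x k ω - x'⟫) ℙ :=
      (hh2int k).sub i0
    rw [this, integral_add i1 i2, integral_sub (hh2int k) i0,
      integral_const_mul, integral_const_mul]
  -- summing up
  have hstep : ∀ k, 2 * (α k * V k) ≤ a k - a (k + 1) + α k ^ 2 * C := by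
    intro k
    have h1 := hrec k
    rw [key k] at h1
    have h2 : α k ^ 2 * (∫ ω, ‖g k ω‖ ^ 2 ∂ℙ) ≤ α k ^ 2 * C :=
      mul_le_mul_of_nonneg_left (hg2 k) (sq_nonneg _)
    linarith
  set T : ℝ := ∑' k, α k ^ 2 with hT
  have hsumbound : ∀ K, 2 * ∑ k ∈ Finset.range K, α k * V k ≤ a 0 + C * T := by
    intro K
    have h1 : ∑ k ∈ Finset.range K, (2 * (α k * V k)) ≤
        ∑ k ∈ Finset.range K, (a k - a (k + 1) + α k ^ 2 * C) :=
      Finset.sum_le_sum fun k _ => hstep k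
    have h2 : ∑ k ∈ Finset.range K, (a k - a (k + 1) + α k ^ 2 * C) =
        (a 0 - a K) + (∑ k ∈ Finset.range K, α k ^ 2) * C := by
      rw [Finset.sum_add_distrib, Finset.sum_range_sub' a, ← Finset.sum_mul]
    have h3 : ∑ k ∈ Finset.range K, α k ^ 2 ≤ T :=
      Summable.sum_le_tsum _ (fun k _ => sq_nonneg _) hsum
    have h4 : (∑ k ∈ Finset.range K, α k ^ 2) * C ≤ T * C :=
      mul_le_mul_of_nonneg_right h3 hCpos
    rw [← Finset.mul_sum] at h1
    have h5 := ha_nonneg K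
    have h6 : T * C = C * T := mul_comm T C
    linarith
  -- conclude by contradiction
  by_contra hcon
  push_neg at hcon
  set Sset : Set ℝ := {c | ∀ᶠ k in atTop, c ≤ V k} with hSset
  have hlim : liminf V atTop = sSup Sset := liminf_eq
  have hne : Sset.Nonempty := by
    by_contra hempty
    rw [Set.not_nonempty_iff_eq_empty] at hempty
    rw [hlim, hempty, Real.sSup_empty] at hcon
    exact lt_irrefl 0 hcon
  have hbdd : BddAbove Sset := by
    by_contra hnb
    rw [hlim, Real.sSup_of_not_bddAbove hnb] at hcon
    exact lt_irrefl 0 hcon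
  obtain ⟨ε, hεmem, hεpos⟩ : ∃ ε ∈ Sset, 0 < ε := by
    rw [hlim] at hcon
    exact exists_lt_of_lt_csSup hne hcon
  obtain ⟨N, hN⟩ := eventually_atTop.1 hεmem
  set S : ℕ → ℝ := fun K => ∑ k ∈ Finset.range K, α k with hS
  set P : ℝ := ∑ k ∈ Finset.range N, α k * V k with hP
  have hbound : ∀ K, N ≤ K → ε * S K ≤ (a 0 + C * T) / 2 - P + ε * S N := by
    intro K hK
    have hsplit : ∑ k ∈ Finset.range K, α k * V k =
        P + ∑ k ∈ Finset.Ico N K, α k * V k := by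
      rw [hP, Finset.sum_range_add_sum_Ico _ hK]
    have hlow : ε * (S K - S N) ≤ ∑ k ∈ Finset.Ico N K, α k * V k := by
      have h1 : ∑ k ∈ Finset.Ico N K, α k * ε ≤ ∑ k ∈ Finset.Ico N K, α k * V k := by
        refine Finset.sum_le_sum fun k hk => ?_
        exact mul_le_mul_of_nonneg_left (hN k (Finset.mem_Ico.1 hk).1) (hα k).le
      have h2 : S K - S N = ∑ k ∈ Finset.Ico N K, α k := by
        rw [hS]
        have := Finset.sum_range_add_sum_Ico α hK
        linarith
      rw [h2, mul_comm]
      calc (∑ k ∈ Finset.Ico N K, α k) * ε = ∑ k ∈ Finset.Ico N K, α k * ε := by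
            rw [Finset.sum_mul]
        _ ≤ _ := h1
    have h3 := hsumbound K
    rw [hsplit] at h3
    clear_value V a T S P
    rw [mul_sub] at hlow
    have hX0 : 2 * (P + (∑ k ∈ Finset.Ico N K, α k * V k)) ≤ a 0 + C * T := h3
    have hX : P + (∑ k ∈ Finset.Ico N K, α k * V k) ≤ (a 0 + C * T) / 2 := by
      generalize hq : P + (∑ k ∈ Finset.Ico N K, α k * V k) = Q at hX0 ⊢
      generalize hy : a 0 + C * T = Y at hX0 ⊢
      linarith only [hX0]
    linarith [hlow, hX]
  have htend : Tendsto (fun K => ε * S K) atTop atTop := hdiv.const_mul_atTop hεpos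
  obtain ⟨K, hK1, hK2⟩ := (htend.eventually_gt_atTop ((a 0 + C * T) / 2 - P + ε * S N)).and
    (eventually_ge_atTop N) |>.exists
  exact absurd (hbound K hK2) (not_le.2 hK1)
end

section
/- Suppose (α_k)_{k∈ℕ} is a monotone nonincreasing sequence of positive step sizes, that there is G > 0 with E[‖∇f(x_k)‖²] ≤ G² for all k, and that for a given x ∈ H there is D > 0 with E[‖x_k − x‖²] ≤ D² for all k. Then for every integer K ≥ 1, (1/K) ∑_{k=0}^{K−1} V_k(x) ≤ (σ²/b + G²) · (1/(2K)) ∑_{k=0}^{K−1} α_k + D² / (2 K α_{K−1}). -/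
open MeasureTheory ProbabilityTheory Filter RealInnerProductSpace

section Aux

variable {Ω : Type*} {m m0 : MeasurableSpace Ω} {μ : Measure Ω}
  {H : Type*} [NormedAddCommGroup H] [InnerProductSpace ℝ H] [CompleteSpace H]

omit [CompleteSpace H] in
lemma my_integrable_inner_s10 [IsFiniteMeasure μ] {u v : Ω → H}
    (hu : MemLp u 2 μ) (hv : MemLp v 2 μ) :
    Integrable (fun ω => ⟪u ω, v ω⟫) μ := by
  have := MeasureTheory.L2.integrable_inner (𝕜 := ℝ) (hu.toLp u) (hv.toLp v)
  refine this.congr ?_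
  filter_upwards [hu.coeFn_toLp, hv.coeFn_toLp] with ω h1 h2
  rw [h1, h2]

lemma my_integral_inner_zero (hm : m ≤ m0) [IsFiniteMeasure μ]
    {u Y : Ω → H} (hu : MemLp u 2 μ) (hY : MemLp Y 2 μ)
    (hYm : AEStronglyMeasurable[m] Y μ) (h0 : μ[u|m] =ᵐ[μ] 0) :
    ∫ ω, ⟪u ω, Y ω⟫ ∂μ = 0 := by
  set uL := hu.toLp u with huL
  set YL := hY.toLp Y with hYL
  have hcl : ((condExpL2 H ℝ hm uL : Lp H 2 μ) : Ω → H) =ᵐ[μ] 0 := by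
    have h1 : ((condExpL2 H ℝ hm uL : Lp H 2 μ) : Ω → H) =ᵐ[μ] μ[(uL : Ω → H)|m] :=
      ae_eq_condExp_of_forall_setIntegral_eq hm ((Lp.memLp uL).integrable one_le_two)
        (fun s _ _ => (integrable_condExpL2_of_isFiniteMeasure hm).integrableOn)
        (fun s hs hμs => integral_condExpL2_eq hm uL hs hμs.ne)
        (aestronglyMeasurable_condExpL2 hm uL)
    exact h1.trans ((condExp_congr_ae hu.coeFn_toLp).trans h0)
  have hips : (⟪((condExpL2 H ℝ hm uL : Lp H 2 μ)), YL⟫ : ℝ) = ⟪uL, YL⟫ :=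
    inner_condExpL2_eq_inner_fun hm uL YL (hYm.congr hY.coeFn_toLp.symm)
  calc ∫ ω, ⟪u ω, Y ω⟫ ∂μ
      = ∫ ω, ⟪uL ω, YL ω⟫ ∂μ := by
        refine integral_congr_ae ?_
        filter_upwards [hu.coeFn_toLp, hY.coeFn_toLp] with ω h1 h2
        rw [h1, h2]
    _ = ⟪uL, YL⟫ := (L2.inner_def uL YL).symm
    _ = ⟪((condExpL2 H ℝ hm uL : Lp H 2 μ)), YL⟫ := hips.symm
    _ = ∫ ω, ⟪((condExpL2 H ℝ hm uL : Lp H 2 μ)) ω, YL ω⟫ ∂μ := L2.inner_def _ _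
    _ = 0 := by
        rw [← integral_zero Ω ℝ (μ := μ)]
        refine integral_congr_ae ?_
        filter_upwards [hcl] with ω h1
        simp [h1]

lemma my_abel (A a : ℕ → ℝ) (D : ℝ) (ha : ∀ k, 0 < a k) (hmono : Antitone a)
    (hA0 : ∀ k, 0 ≤ A k) (hAD : ∀ k, A k ≤ D ^ 2) :
    ∀ K, 1 ≤ K → ∑ k ∈ Finset.range K, (A k - A (k + 1)) / (2 * a k)
      ≤ D ^ 2 / (2 * a (K - 1)) - A K / (2 * a (K - 1)) := by
  intro K hK
  induction K, hK using Nat.le_induction with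
  | base =>
    simp only [Finset.sum_range_one, Nat.sub_self, zero_add]
    rw [sub_div]
    have h : A 0 / (2 * a 0) ≤ D ^ 2 / (2 * a 0) :=
      (div_le_div_iff_of_pos_right (mul_pos two_pos (ha 0))).mpr (hAD 0)
    linarith
  | succ n hn ih =>
    rw [Finset.sum_range_succ]
    simp only [Nat.add_sub_cancel]
    have hb := ha n
    have ha' := ha (n - 1)
    have hab : a n ≤ a (n - 1) := hmono (Nat.sub_le n 1)
    have key : (D ^ 2 - A n) / (2 * a (n - 1)) ≤ (D ^ 2 - A n) / (2 * a n) :=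
      div_le_div_of_nonneg_left (by linarith [hAD n]) (mul_pos two_pos hb)
        (by linarith [hab])
    rw [sub_div, sub_div] at key
    rw [sub_div]
    linarith [ih]

end Aux

/-- Theorem 4 (second assertion) of the paper in the Euclidean/Hilbert setting
(`ζ(κ,c) = 1`, so `C₁ = 1/2` and `C₂ = D²/2`): for RSGD with monotone
nonincreasing positive step sizes, `E[‖∇f(x_k)‖²] ≤ G²`, and `E[‖x_k − x‖²] ≤ D²`,
for every `K ≥ 1`,
`(1/K) ∑_{k<K} V_k(x) ≤ (σ²/b + G²) · (1/(2K)) ∑_{k<K} α_k + D²/(2Kα_{K−1})`. -/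
theorem rsgd_monotone_step_vi_sum_bound
    {Ω : Type*} [MeasureSpace Ω] [IsProbabilityMeasure (ℙ : Measure Ω)]
    {H : Type*} [NormedAddCommGroup H] [InnerProductSpace ℝ H] [CompleteSpace H]
    (𝓕 : Filtration ℕ (inferInstance : MeasurableSpace Ω))
    (f : H → ℝ) (hf : ContDiff ℝ 1 f)
    (x₀ : H) (α : ℕ → ℝ) (hα : ∀ k, 0 < α k)
    (b : ℕ) (hb : 1 ≤ b) (σ2 : ℝ) (hσ2 : 0 ≤ σ2)
    (g : ℕ → Ω → H)
    (hg_meas : ∀ k, StronglyMeasurable[𝓕 (k + 1)] (g k))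
    (hg_L2 : ∀ k, MemLp (g k) 2 ℙ)
    (x : ℕ → Ω → H)
    (hx0 : x 0 = fun _ => x₀)
    (hxrec : ∀ k, x (k + 1) = fun ω => x k ω - α k • g k ω)
    (hx_meas : ∀ k, StronglyMeasurable[𝓕 k] (x k))
    (hg_mean : ∀ k, condExp (𝓕 k) ℙ (g k) =ᵐ[ℙ] fun ω => gradient f (x k ω))
    (hg_var : ∀ k, ∀ᵐ ω ∂ℙ,
      condExp (𝓕 k) ℙ (fun ω' => ‖g k ω' - gradient f (x k ω')‖ ^ 2) ω ≤ σ2 / b)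
    (hx_int : ∀ k, Integrable (fun ω => ‖x k ω‖ ^ 2) ℙ)
    (hgrad_int : ∀ k, Integrable (fun ω => ‖gradient f (x k ω)‖ ^ 2) ℙ)
    (hmono : Antitone α)
    (G : ℝ) (hG : 0 < G)
    (hGbound : ∀ k, (∫ ω, ‖gradient f (x k ω)‖ ^ 2 ∂ℙ) ≤ G ^ 2)
    (x' : H) (D : ℝ) (hD : 0 < D)
    (hDbound : ∀ k, (∫ ω, ‖x k ω - x'‖ ^ 2 ∂ℙ) ≤ D ^ 2) :
    ∀ K : ℕ, 1 ≤ K →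
      (1 / (K : ℝ)) * ∑ k ∈ Finset.range K,
          ∫ ω, ⟪gradient f (x k ω), x k ω - x'⟫ ∂ℙ
        ≤ (σ2 / b + G ^ 2) * ((1 / (2 * (K : ℝ))) * ∑ k ∈ Finset.range K, α k)
          + D ^ 2 / (2 * (K : ℝ) * α (K - 1)) := by
  classical
  have hbpos : (0:ℝ) < b := by exact_mod_cast hb
  set C : ℝ := σ2 / b + G ^ 2 with hC
  have hC0 : 0 ≤ C := add_nonneg (div_nonneg hσ2 hbpos.le) (sq_nonneg G)
  have hgrad_cont : Continuous (gradient f) :=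
    (InnerProductSpace.toDual ℝ H).symm.continuous.comp (hf.continuous_fderiv one_ne_zero)
  set A : ℕ → ℝ := fun k => ∫ ω, ‖x k ω - x'‖ ^ 2 ∂ℙ with hA
  set V : ℕ → ℝ := fun k => ∫ ω, ⟪gradient f (x k ω), x k ω - x'⟫ ∂ℙ with hV
  have key : ∀ k, V k ≤ (A k - A (k + 1)) / (2 * α k) + α k / 2 * C := by
    intro k
    have hm := 𝓕.le k
    have hxm : StronglyMeasurable[𝓕 k] (x k) := hx_meas k
    have hGm : StronglyMeasurable[𝓕 k] (fun ω => gradient f (x k ω)) :=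
      hgrad_cont.comp_stronglyMeasurable hxm
    have hx2 : MemLp (x k) 2 ℙ :=
      (memLp_two_iff_integrable_sq_norm (hxm.mono hm).aestronglyMeasurable).mpr (hx_int k)
    have hY2 : MemLp (fun ω => x k ω - x') 2 ℙ := hx2.sub (memLp_const x')
    have hG2 : MemLp (fun ω => gradient f (x k ω)) 2 ℙ :=
      (memLp_two_iff_integrable_sq_norm (hGm.mono hm).aestronglyMeasurable).mpr (hgrad_int k)
    have hg2 : MemLp (g k) 2 ℙ := hg_L2 k
    have hu2 : MemLp (fun ω => g k ω - gradient f (x k ω)) 2 ℙ := hg2.sub hG2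
    -- conditional expectation of the noise is 0
    have hu0 : condExp (𝓕 k) ℙ (fun ω => g k ω - gradient f (x k ω)) =ᵐ[ℙ] 0 := by
      have h1 : condExp (𝓕 k) ℙ (g k - fun ω => gradient f (x k ω)) =ᵐ[ℙ]
          condExp (𝓕 k) ℙ (g k) - condExp (𝓕 k) ℙ (fun ω => gradient f (x k ω)) :=
        condExp_sub (hg2.integrable one_le_two) (hG2.integrable one_le_two) (𝓕 k)
      have h2 : condExp (𝓕 k) ℙ (fun ω => gradient f (x k ω))
          = fun ω => gradient f (x k ω) :=
        condExp_of_stronglyMeasurable hm hGm (hG2.integrable one_le_two)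
      filter_upwards [h1, hg_mean k] with ω hω1 hω2
      show condExp (𝓕 k) ℙ (g k - fun ω => gradient f (x k ω)) ω = 0
      rw [hω1]
      simp only [Pi.sub_apply]
      rw [hω2, congrFun h2 ω, sub_self]
    have horth1 : ∫ ω, ⟪g k ω - gradient f (x k ω), x k ω - x'⟫ ∂ℙ = 0 :=
      my_integral_inner_zero hm hu2 hY2
        ((hxm.sub stronglyMeasurable_const).aestronglyMeasurable) hu0
    have horth2 : ∫ ω, ⟪g k ω - gradient f (x k ω), gradient f (x k ω)⟫ ∂ℙ = 0 :=
      my_integral_inner_zero hm hu2 hG2 hGm.aestronglyMeasurable hu0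
    have hintu : Integrable (fun ω => ‖g k ω - gradient f (x k ω)‖ ^ 2) ℙ :=
      (memLp_two_iff_integrable_sq_norm hu2.aestronglyMeasurable).mp hu2
    -- variance bound
    have hvar : ∫ ω, ‖g k ω - gradient f (x k ω)‖ ^ 2 ∂ℙ ≤ σ2 / b := by
      rw [← integral_condExp hm (f := fun ω' => ‖g k ω' - gradient f (x k ω')‖ ^ 2) (μ := ℙ)]
      calc ∫ ω, condExp (𝓕 k) ℙ (fun ω' => ‖g k ω' - gradient f (x k ω')‖ ^ 2) ω ∂ℙ
          ≤ ∫ _ω, σ2 / b ∂ℙ :=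
            integral_mono_ae integrable_condExp (integrable_const _) (hg_var k)
        _ = σ2 / b := by simp
    -- second moment bound for g
    have hIinner2 : Integrable
        (fun ω => ⟪g k ω - gradient f (x k ω), gradient f (x k ω)⟫) ℙ :=
      my_integrable_inner_s10 hu2 hG2
    have hgn : ∫ ω, ‖g k ω‖ ^ 2 ∂ℙ ≤ C := by
      have hpt : ∀ ω, ‖g k ω‖ ^ 2
          = ‖g k ω - gradient f (x k ω)‖ ^ 2
            + 2 * ⟪g k ω - gradient f (x k ω), gradient f (x k ω)⟫
            + ‖gradient f (x k ω)‖ ^ 2 := by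
        intro ω
        have h := norm_add_sq_real (g k ω - gradient f (x k ω)) (gradient f (x k ω))
        rw [sub_add_cancel] at h
        linarith
      have i2 : Integrable
          (fun ω => 2 * ⟪g k ω - gradient f (x k ω), gradient f (x k ω)⟫) ℙ :=
        hIinner2.const_mul 2
      have i12 : Integrable (fun ω => ‖g k ω - gradient f (x k ω)‖ ^ 2
          + 2 * ⟪g k ω - gradient f (x k ω), gradient f (x k ω)⟫) ℙ := hintu.add i2
      have e0 : ∫ ω, ‖g k ω‖ ^ 2 ∂ℙ
          = ∫ ω, (‖g k ω - gradient f (x k ω)‖ ^ 2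
            + 2 * ⟪g k ω - gradient f (x k ω), gradient f (x k ω)⟫
            + ‖gradient f (x k ω)‖ ^ 2) ∂ℙ := integral_congr_ae (ae_of_all _ hpt)
      have e1 : ∫ ω, (‖g k ω - gradient f (x k ω)‖ ^ 2
            + 2 * ⟪g k ω - gradient f (x k ω), gradient f (x k ω)⟫
            + ‖gradient f (x k ω)‖ ^ 2) ∂ℙ
          = (∫ ω, (‖g k ω - gradient f (x k ω)‖ ^ 2
            + 2 * ⟪g k ω - gradient f (x k ω), gradient f (x k ω)⟫) ∂ℙ)
            + ∫ ω, ‖gradient f (x k ω)‖ ^ 2 ∂ℙ := integral_add i12 (hgrad_int k)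
      have e2 : ∫ ω, (‖g k ω - gradient f (x k ω)‖ ^ 2
            + 2 * ⟪g k ω - gradient f (x k ω), gradient f (x k ω)⟫) ∂ℙ
          = (∫ ω, ‖g k ω - gradient f (x k ω)‖ ^ 2 ∂ℙ)
            + ∫ ω, 2 * ⟪g k ω - gradient f (x k ω), gradient f (x k ω)⟫ ∂ℙ :=
        integral_add hintu i2
      have e3 : ∫ ω, 2 * ⟪g k ω - gradient f (x k ω), gradient f (x k ω)⟫ ∂ℙ
          = 2 * ∫ ω, ⟪g k ω - gradient f (x k ω), gradient f (x k ω)⟫ ∂ℙ :=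
        integral_const_mul 2 _
      rw [e0, e1, e2, e3, horth2]
      have := hGbound k
      rw [hC]
      linarith [hvar]
    -- one-step recursion
    have hIgy : Integrable (fun ω => ⟪g k ω, x k ω - x'⟫) ℙ := my_integrable_inner_s10 hg2 hY2
    have hIgn : Integrable (fun ω => ‖g k ω‖ ^ 2) ℙ :=
      (memLp_two_iff_integrable_sq_norm hg2.aestronglyMeasurable).mp hg2
    have hIy : Integrable (fun ω => ‖x k ω - x'‖ ^ 2) ℙ :=
      (memLp_two_iff_integrable_sq_norm hY2.aestronglyMeasurable).mp hY2
    have hrec : A (k + 1) = A k - 2 * α k * (∫ ω, ⟪g k ω, x k ω - x'⟫ ∂ℙ)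
        + α k ^ 2 * ∫ ω, ‖g k ω‖ ^ 2 ∂ℙ := by
      have hpt : ∀ ω, ‖x (k + 1) ω - x'‖ ^ 2
          = ‖x k ω - x'‖ ^ 2 - 2 * α k * ⟪g k ω, x k ω - x'⟫ + α k ^ 2 * ‖g k ω‖ ^ 2 := by
        intro ω
        rw [hxrec k]
        have h3 : x k ω - α k • g k ω - x' = (x k ω - x') - α k • g k ω := by abel
        rw [h3, norm_sub_sq_real, real_inner_smul_right, norm_smul]
        simp only [Real.norm_eq_abs, mul_pow, sq_abs]
        rw [real_inner_comm]
        ring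
      have i1 : Integrable (fun ω => 2 * α k * ⟪g k ω, x k ω - x'⟫) ℙ :=
        hIgy.const_mul _
      have i2 : Integrable
          (fun ω => ‖x k ω - x'‖ ^ 2 - 2 * α k * ⟪g k ω, x k ω - x'⟫) ℙ := hIy.sub i1
      have i3 : Integrable (fun ω => α k ^ 2 * ‖g k ω‖ ^ 2) ℙ := hIgn.const_mul _
      have e0 : ∫ ω, ‖x (k + 1) ω - x'‖ ^ 2 ∂ℙ
          = ∫ ω, (‖x k ω - x'‖ ^ 2 - 2 * α k * ⟪g k ω, x k ω - x'⟫
            + α k ^ 2 * ‖g k ω‖ ^ 2) ∂ℙ := integral_congr_ae (ae_of_all _ hpt)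
      have e1 : ∫ ω, (‖x k ω - x'‖ ^ 2 - 2 * α k * ⟪g k ω, x k ω - x'⟫
            + α k ^ 2 * ‖g k ω‖ ^ 2) ∂ℙ
          = (∫ ω, (‖x k ω - x'‖ ^ 2 - 2 * α k * ⟪g k ω, x k ω - x'⟫) ∂ℙ)
            + ∫ ω, α k ^ 2 * ‖g k ω‖ ^ 2 ∂ℙ := integral_add i2 i3
      have e2 : ∫ ω, (‖x k ω - x'‖ ^ 2 - 2 * α k * ⟪g k ω, x k ω - x'⟫) ∂ℙ
          = (∫ ω, ‖x k ω - x'‖ ^ 2 ∂ℙ) - ∫ ω, 2 * α k * ⟪g k ω, x k ω - x'⟫ ∂ℙ :=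
        integral_sub hIy i1
      have e3 : ∫ ω, 2 * α k * ⟪g k ω, x k ω - x'⟫ ∂ℙ
          = 2 * α k * ∫ ω, ⟪g k ω, x k ω - x'⟫ ∂ℙ := integral_const_mul _ _
      have e4 : ∫ ω, α k ^ 2 * ‖g k ω‖ ^ 2 ∂ℙ
          = α k ^ 2 * ∫ ω, ‖g k ω‖ ^ 2 ∂ℙ := integral_const_mul _ _
      show (∫ ω, ‖x (k + 1) ω - x'‖ ^ 2 ∂ℙ) = _
      rw [e0, e1, e2, e3, e4]
    have hsplit : ∫ ω, ⟪g k ω, x k ω - x'⟫ ∂ℙ = V k := by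
      have hpt : ∀ ω, ⟪g k ω, x k ω - x'⟫
          = ⟪gradient f (x k ω), x k ω - x'⟫
            + ⟪g k ω - gradient f (x k ω), x k ω - x'⟫ := by
        intro ω
        rw [inner_sub_left]
        ring
      rw [integral_congr_ae (ae_of_all _ hpt),
        integral_add (my_integrable_inner_s10 hG2 hY2) (my_integrable_inner_s10 hu2 hY2),
        horth1, add_zero]
    have hstep : 2 * α k * V k ≤ A k - A (k + 1) + α k ^ 2 * C := by
      rw [hrec, hsplit]
      have h4 : α k ^ 2 * (∫ ω, ‖g k ω‖ ^ 2 ∂ℙ) ≤ α k ^ 2 * C :=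
        mul_le_mul_of_nonneg_left hgn (sq_nonneg _)
      linarith
    have h2a : (0:ℝ) < 2 * α k := mul_pos two_pos (hα k)
    have h5 : V k ≤ (A k - A (k + 1) + α k ^ 2 * C) / (2 * α k) := by
      rw [le_div_iff₀ h2a]
      linarith
    refine h5.trans (le_of_eq ?_)
    field_simp
  -- summation
  intro K hK
  have hKpos : (0:ℝ) < K := by exact_mod_cast hK
  have hA0 : ∀ k, 0 ≤ A k := fun k => integral_nonneg (fun ω => sq_nonneg _)
  have hAD : ∀ k, A k ≤ D ^ 2 := hDbound
  have habel := my_abel A α D hα hmono hA0 hAD K hK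
  have haK := hα (K - 1)
  have hAKnn : 0 ≤ A K / (2 * α (K - 1)) := div_nonneg (hA0 K) (mul_pos two_pos haK).le
  have hsum : ∑ k ∈ Finset.range K, V k
      ≤ D ^ 2 / (2 * α (K - 1)) + C / 2 * ∑ k ∈ Finset.range K, α k := by
    calc ∑ k ∈ Finset.range K, V k
        ≤ ∑ k ∈ Finset.range K, ((A k - A (k + 1)) / (2 * α k) + α k / 2 * C) :=
          Finset.sum_le_sum (fun k _ => key k)
      _ = (∑ k ∈ Finset.range K, (A k - A (k + 1)) / (2 * α k))
          + ∑ k ∈ Finset.range K, α k / 2 * C := Finset.sum_add_distrib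
      _ ≤ (D ^ 2 / (2 * α (K - 1)) - A K / (2 * α (K - 1)))
          + C / 2 * ∑ k ∈ Finset.range K, α k := by
          have h6 : ∑ k ∈ Finset.range K, α k / 2 * C
              = C / 2 * ∑ k ∈ Finset.range K, α k := by
            rw [Finset.mul_sum]
            exact Finset.sum_congr rfl (fun k _ => by ring)
          rw [h6]
          linarith [habel]
      _ ≤ D ^ 2 / (2 * α (K - 1)) + C / 2 * ∑ k ∈ Finset.range K, α k := by linarith
  have hfinal := mul_le_mul_of_nonneg_left hsum (by positivity : (0:ℝ) ≤ 1 / K)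
  refine hfinal.trans (le_of_eq ?_)
  field_simp
  ring
end

section
/- Let C₁, C₂, α, G, σ², ε be real constants with C₁, C₂, α, G, ε > 0, σ² ≥ 0 and ε > G²αC₁, and define K(b) := C₂ b / (εb − (σ² + G²b)αC₁) for real batch sizes b > σ²αC₁ / (ε − G²αC₁). Then on this interval K(b) > 0, K is monotone nonincreasing (its derivative satisfies dK/db = −C₁C₂ασ² / (εb − (σ² + G²b)αC₁)² ≤ 0), and K is convex. -/
/-- Theorem 5 of the paper, constant step size `α_k = α`: on the interval
`b > σ²αC₁/(ε − G²αC₁)`, the number of steps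
`K(b) = C₂ b / (εb − (σ² + G²b)αC₁)` needed for an ε-approximation is positive,
monotone nonincreasing (with derivative `−C₁C₂ασ²/(εb − (σ² + G²b)αC₁)² ≤ 0`),
and convex in the batch size `b`. -/
theorem steps_pos_antitone_convex
    (C₁ C₂ α G σ2 ε : ℝ) (hC₁ : 0 < C₁) (hC₂ : 0 < C₂) (hα : 0 < α)
    (hG : 0 < G) (hσ2 : 0 ≤ σ2) (hε : 0 < ε) (hεG : G ^ 2 * α * C₁ < ε) :
    (∀ b ∈ Set.Ioi (σ2 * α * C₁ / (ε - G ^ 2 * α * C₁)),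
        0 < C₂ * b / (ε * b - (σ2 + G ^ 2 * b) * α * C₁)) ∧
    AntitoneOn (fun b => C₂ * b / (ε * b - (σ2 + G ^ 2 * b) * α * C₁))
      (Set.Ioi (σ2 * α * C₁ / (ε - G ^ 2 * α * C₁))) ∧
    (∀ b ∈ Set.Ioi (σ2 * α * C₁ / (ε - G ^ 2 * α * C₁)),
        HasDerivAt (fun b => C₂ * b / (ε * b - (σ2 + G ^ 2 * b) * α * C₁))
          (-(C₁ * C₂ * α * σ2) / (ε * b - (σ2 + G ^ 2 * b) * α * C₁) ^ 2) b ∧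
        -(C₁ * C₂ * α * σ2) / (ε * b - (σ2 + G ^ 2 * b) * α * C₁) ^ 2 ≤ 0) ∧
    ConvexOn ℝ (Set.Ioi (σ2 * α * C₁ / (ε - G ^ 2 * α * C₁)))
      (fun b => C₂ * b / (ε * b - (σ2 + G ^ 2 * b) * α * C₁)) := by
  set c : ℝ := ε - G ^ 2 * α * C₁ with hc_def
  set d : ℝ := σ2 * α * C₁ with hd_def
  have hc : 0 < c := sub_pos.mpr hεG
  have hd : 0 ≤ d := by positivity
  have hdenom : ∀ b : ℝ, ε * b - (σ2 + G ^ 2 * b) * α * C₁ = c * b - d := by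
    intro b; simp only [hc_def, hd_def]; ring
  have hpos : ∀ b ∈ Set.Ioi (d / c), 0 < c * b - d := by
    intro b hb
    have : d / c < b := hb
    have := (div_lt_iff₀ hc).mp this
    linarith [this]
  have hbpos : ∀ b ∈ Set.Ioi (d / c), 0 < b := by
    intro b hb
    have h0 : (0 : ℝ) ≤ d / c := div_nonneg hd hc.le
    exact lt_of_le_of_lt h0 hb
  -- positivity
  have hP : ∀ b ∈ Set.Ioi (d / c),
      0 < C₂ * b / (ε * b - (σ2 + G ^ 2 * b) * α * C₁) := by
    intro b hb
    rw [hdenom]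
    exact div_pos (mul_pos hC₂ (hbpos b hb)) (hpos b hb)
  -- derivative
  have hD : ∀ b ∈ Set.Ioi (d / c),
      HasDerivAt (fun b => C₂ * b / (ε * b - (σ2 + G ^ 2 * b) * α * C₁))
        (-(C₁ * C₂ * α * σ2) / (ε * b - (σ2 + G ^ 2 * b) * α * C₁) ^ 2) b := by
    intro b hb
    have hne : ε * b - (σ2 + G ^ 2 * b) * α * C₁ ≠ 0 := by
      rw [hdenom]; exact (hpos b hb).ne'
    have hf : HasDerivAt (fun b : ℝ => C₂ * b) C₂ b := by
      simpa using (hasDerivAt_id b).const_mul C₂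
    have hg : HasDerivAt (fun b : ℝ => ε * b - (σ2 + G ^ 2 * b) * α * C₁) c b := by
      have h1 : HasDerivAt (fun b : ℝ => ε * b) ε b := by
        simpa using (hasDerivAt_id b).const_mul ε
      have h2 : HasDerivAt (fun b : ℝ => (σ2 + G ^ 2 * b) * α * C₁)
          (G ^ 2 * α * C₁) b := by
        have : HasDerivAt (fun b : ℝ => σ2 + G ^ 2 * b) (G ^ 2) b := by
          simpa using ((hasDerivAt_id b).const_mul (G ^ 2)).const_add σ2
        simpa [mul_assoc] using (this.mul_const α).mul_const C₁
      exact h1.sub h2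
    have hval : (C₂ * (ε * b - (σ2 + G ^ 2 * b) * α * C₁) - C₂ * b * c) /
        (ε * b - (σ2 + G ^ 2 * b) * α * C₁) ^ 2
        = -(C₁ * C₂ * α * σ2) / (ε * b - (σ2 + G ^ 2 * b) * α * C₁) ^ 2 := by
      congr 1
      simp only [hc_def]; ring
    exact hval ▸ hf.div hg hne
  have hDle : ∀ b ∈ Set.Ioi (d / c),
      -(C₁ * C₂ * α * σ2) / (ε * b - (σ2 + G ^ 2 * b) * α * C₁) ^ 2 ≤ 0 := by
    intro b hb
    apply div_nonpos_of_nonpos_of_nonneg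
    · nlinarith
    · positivity
  -- antitone
  have hA : AntitoneOn (fun b => C₂ * b / (ε * b - (σ2 + G ^ 2 * b) * α * C₁))
      (Set.Ioi (d / c)) := by
    apply antitoneOn_of_deriv_nonpos (convex_Ioi _)
    · intro b hb
      exact ((hD b hb).differentiableAt.continuousAt).continuousWithinAt
    · rw [interior_Ioi]
      intro b hb
      exact (hD b hb).differentiableAt.differentiableWithinAt
    · rw [interior_Ioi]
      intro b hb
      rw [(hD b hb).deriv]
      exact hDle b hb
  -- convexity
  have hCv : ConvexOn ℝ (Set.Ioi (d / c))
      (fun b => C₂ * b / (ε * b - (σ2 + G ^ 2 * b) * α * C₁)) := by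
    have hinv : ConvexOn ℝ (Set.Ioi (0 : ℝ)) (fun x : ℝ => x⁻¹) := by
      have := (strictConvexOn_zpow (m := -1) (by norm_num) (by norm_num)).convexOn
      simpa using this
    let A : ℝ →ᵃ[ℝ] ℝ := c • AffineMap.id ℝ ℝ + AffineMap.const ℝ ℝ (-d)
    have hA' : ∀ x : ℝ, A x = c * x - d := by
      intro x
      simp [A, sub_eq_add_neg]
    have hpre : A ⁻¹' Set.Ioi (0 : ℝ) = Set.Ioi (d / c) := by
      ext x
      simp only [Set.mem_preimage, Set.mem_Ioi, hA']
      rw [div_lt_iff₀ hc]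
      constructor <;> intro h <;> linarith
    have h2 : ConvexOn ℝ (Set.Ioi (d / c)) (fun x : ℝ => (c * x - d)⁻¹) := by
      have := hinv.comp_affineMap A
      rw [hpre] at this
      exact this.congr (fun x _ => by simp [Function.comp, hA'])
    have h3 : ConvexOn ℝ (Set.Ioi (d / c))
        (fun x : ℝ => C₂ * d / c * (c * x - d)⁻¹ + C₂ / c) := by
      have := (h2.smul (c := C₂ * d / c) (by positivity)).add_const (C₂ / c)
      exact this
    apply h3.congr
    intro x hx
    have hne : c * x - d ≠ 0 := (hpos x hx).ne'
    show C₂ * d / c * (c * x - d)⁻¹ + C₂ / c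
        = C₂ * x / (ε * x - (σ2 + G ^ 2 * x) * α * C₁)
    rw [hdenom]
    field_simp
    ring
  exact ⟨hP, hA, fun b hb => ⟨hD b hb, hDle b hb⟩, hCv⟩
end

section
/- Let C₁, C₂, α, G, σ², ε be real constants with C₁, C₂, α, G, ε, σ² > 0 and ε > G²αC₁. Then the SFO complexity b ↦ K(b)·b = C₂ b² / (εb − (σ² + G²b)αC₁) is convex on the interval b > σ²αC₁ / (ε − G²αC₁) (its second derivative equals 2C₁²C₂α²σ⁴ / (εb − (σ² + G²b)αC₁)³ ≥ 0), and it attains its global minimum on this interval exactly at the critical batch size b⋆ = 2σ²αC₁ / (ε − G²αC₁). -/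
/-- Theorem 5 of the paper, constant step size `α_k = α`: the SFO complexity
`K(b)·b = C₂ b² / (εb − (σ² + G²b)αC₁)` is convex on `b > σ²αC₁/(ε − G²αC₁)`
(its second derivative equals `2C₁²C₂α²σ⁴/(εb − (σ² + G²b)αC₁)³ ≥ 0`), and it
attains its global minimum on this interval exactly at the critical batch size
`b⋆ = 2σ²αC₁/(ε − G²αC₁)`. -/
theorem sfo_convex_min_at_critical_batch_size
    (C₁ C₂ α G σ2 ε : ℝ) (hC₁ : 0 < C₁) (hC₂ : 0 < C₂) (hα : 0 < α)
    (hG : 0 < G) (hσ2 : 0 < σ2) (hε : 0 < ε) (hεG : G ^ 2 * α * C₁ < ε) :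
    ConvexOn ℝ (Set.Ioi (σ2 * α * C₁ / (ε - G ^ 2 * α * C₁)))
      (fun b => C₂ * b ^ 2 / (ε * b - (σ2 + G ^ 2 * b) * α * C₁)) ∧
    (∀ b ∈ Set.Ioi (σ2 * α * C₁ / (ε - G ^ 2 * α * C₁)),
        deriv (deriv (fun b => C₂ * b ^ 2 / (ε * b - (σ2 + G ^ 2 * b) * α * C₁))) b
          = 2 * C₁ ^ 2 * C₂ * α ^ 2 * σ2 ^ 2
            / (ε * b - (σ2 + G ^ 2 * b) * α * C₁) ^ 3 ∧
        0 ≤ 2 * C₁ ^ 2 * C₂ * α ^ 2 * σ2 ^ 2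
            / (ε * b - (σ2 + G ^ 2 * b) * α * C₁) ^ 3) ∧
    2 * σ2 * α * C₁ / (ε - G ^ 2 * α * C₁)
      ∈ Set.Ioi (σ2 * α * C₁ / (ε - G ^ 2 * α * C₁)) ∧
    (∀ b ∈ Set.Ioi (σ2 * α * C₁ / (ε - G ^ 2 * α * C₁)),
        C₂ * (2 * σ2 * α * C₁ / (ε - G ^ 2 * α * C₁)) ^ 2
          / (ε * (2 * σ2 * α * C₁ / (ε - G ^ 2 * α * C₁))
              - (σ2 + G ^ 2 * (2 * σ2 * α * C₁ / (ε - G ^ 2 * α * C₁))) * α * C₁)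
        ≤ C₂ * b ^ 2 / (ε * b - (σ2 + G ^ 2 * b) * α * C₁)) ∧
    (∀ b ∈ Set.Ioi (σ2 * α * C₁ / (ε - G ^ 2 * α * C₁)),
        (∀ b' ∈ Set.Ioi (σ2 * α * C₁ / (ε - G ^ 2 * α * C₁)),
            C₂ * b ^ 2 / (ε * b - (σ2 + G ^ 2 * b) * α * C₁)
              ≤ C₂ * b' ^ 2 / (ε * b' - (σ2 + G ^ 2 * b') * α * C₁)) →
        b = 2 * σ2 * α * C₁ / (ε - G ^ 2 * α * C₁)) := by
  set D := ε - G ^ 2 * α * C₁ with hDdef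
  set s := σ2 * α * C₁ with hsdef
  have hD : 0 < D := by rw [hDdef]; linarith
  have hs : 0 < s := by rw [hsdef]; positivity
  have heq : ∀ b : ℝ, ε * b - (σ2 + G ^ 2 * b) * α * C₁ = D * b - s := by
    intro b; rw [hDdef, hsdef]; ring
  have hb2 : 2 * σ2 * α * C₁ = 2 * s := by rw [hsdef]; ring
  have hc2 : 2 * C₁ ^ 2 * C₂ * α ^ 2 * σ2 ^ 2 = 2 * C₂ * s ^ 2 := by
    rw [hsdef]; ring
  simp only [heq, hb2, hc2]
  -- positivity of denominator on the interval
  have hg : ∀ b ∈ Set.Ioi (s / D), 0 < D * b - s := by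
    intro b hb
    have : s / D < b := hb
    have := (div_lt_iff₀ hD).mp this
    nlinarith
  -- first derivative
  have hd1 : ∀ b : ℝ, D * b - s ≠ 0 →
      HasDerivAt (fun b => C₂ * b ^ 2 / (D * b - s))
        (C₂ * (D * b ^ 2 - 2 * s * b) / (D * b - s) ^ 2) b := by
    intro b hb
    have h1 : HasDerivAt (fun b : ℝ => C₂ * b ^ 2) (C₂ * (2 * b)) b := by
      simpa using ((hasDerivAt_pow 2 b).const_mul C₂)
    have h2 : HasDerivAt (fun b : ℝ => D * b - s) D b := by
      simpa using (((hasDerivAt_id b).const_mul D).sub_const s)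
    have h3 := h1.div h2 hb
    refine h3.congr_deriv ?_
    ring
  -- second derivative
  have hd2 : ∀ b : ℝ, D * b - s ≠ 0 →
      HasDerivAt (fun b => C₂ * (D * b ^ 2 - 2 * s * b) / (D * b - s) ^ 2)
        (2 * C₂ * s ^ 2 / (D * b - s) ^ 3) b := by
    intro b hb
    have h1 : HasDerivAt (fun b : ℝ => C₂ * (D * b ^ 2 - 2 * s * b))
        (C₂ * (D * (2 * b) - 2 * s)) b := by
      have hp : HasDerivAt (fun b : ℝ => D * b ^ 2 - 2 * s * b)
          (D * (2 * b) - 2 * s) b := by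
        have := ((hasDerivAt_pow 2 b).const_mul D).sub
          (((hasDerivAt_id b).const_mul (2 * s)))
        exact this.congr_deriv (by simp)
      exact hp.const_mul C₂
    have h2 : HasDerivAt (fun b : ℝ => (D * b - s) ^ 2)
        (2 * (D * b - s) ^ 1 * D) b := by
      have hl : HasDerivAt (fun b : ℝ => D * b - s) D b := by
        simpa using (((hasDerivAt_id b).const_mul D).sub_const s)
      exact (hl.pow 2).congr_deriv (by simp)
    have h3 := h1.div h2 (pow_ne_zero 2 hb)
    refine h3.congr_deriv ?_
    rw [div_eq_div_iff (pow_ne_zero 2 (pow_ne_zero 2 hb)) (pow_ne_zero 3 hb)]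
    ring
  have hU : IsOpen {b : ℝ | D * b - s ≠ 0} := by
    have : Continuous fun b : ℝ => D * b - s := by continuity
    exact isOpen_compl_singleton.preimage this
  have hEq : ∀ b : ℝ, D * b - s ≠ 0 →
      deriv (fun b => C₂ * b ^ 2 / (D * b - s)) =ᶠ[nhds b]
        fun b => C₂ * (D * b ^ 2 - 2 * s * b) / (D * b - s) ^ 2 := by
    intro b hb
    exact Filter.eventuallyEq_of_mem (hU.mem_nhds hb) fun x hx => (hd1 x hx).deriv
  have hderiv2 : ∀ b : ℝ, D * b - s ≠ 0 →
      deriv (deriv (fun b => C₂ * b ^ 2 / (D * b - s))) b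
        = 2 * C₂ * s ^ 2 / (D * b - s) ^ 3 := by
    intro b hb
    rw [(hEq b hb).deriv_eq]
    exact (hd2 b hb).deriv
  have hpart4 : ∀ b ∈ Set.Ioi (s / D),
      4 * C₂ * s / D ^ 2 ≤ C₂ * b ^ 2 / (D * b - s) := by
    intro b hb
    have hgb := hg b hb
    rw [div_le_div_iff₀ (pow_pos hD 2) hgb]
    nlinarith [mul_nonneg hC₂.le (sq_nonneg (D * b - 2 * s))]
  refine ⟨?_, ?_, ?_, ?_, ?_⟩
  · -- convexity
    refine convexOn_of_deriv2_nonneg (convex_Ioi _) ?_ ?_ ?_ ?_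
    · intro x hx
      exact ((hd1 x (hg x hx).ne').differentiableAt).continuousAt.continuousWithinAt
    · rw [interior_Ioi]
      intro x hx
      exact ((hd1 x (hg x hx).ne').differentiableAt).differentiableWithinAt
    · rw [interior_Ioi]
      intro x hx
      exact (((hEq x (hg x hx).ne').differentiableAt_iff).mpr
        ((hd2 x (hg x hx).ne').differentiableAt)).differentiableWithinAt
    · rw [interior_Ioi]
      intro x hx
      have hgx := hg x hx
      simp only [Function.iterate_succ, Function.iterate_zero, Function.comp,
        id_eq]
      rw [hderiv2 x hgx.ne']
      positivity
  · intro b hb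
    have hgb := hg b hb
    exact ⟨hderiv2 b hgb.ne', by positivity⟩
  · show s / D < 2 * s / D
    rw [div_lt_div_iff₀ hD hD]
    nlinarith
  · intro b hb
    have hgb := hg b hb
    have hden : D * (2 * s / D) - s = s := by field_simp; ring
    have hv : C₂ * (2 * s / D) ^ 2 / s = 4 * C₂ * s / D ^ 2 := by
      field_simp; ring
    rw [hden, hv]
    exact hpart4 b hb
  · intro b hb hmin
    have hgb := hg b hb
    have hbstar : (2 * s / D) ∈ Set.Ioi (s / D) := by
      show s / D < 2 * s / D
      rw [div_lt_div_iff₀ hD hD]; nlinarith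
    have h1 := hmin (2 * s / D) hbstar
    have hden : D * (2 * s / D) - s = s := by field_simp; ring
    rw [hden] at h1
    have hv : C₂ * (2 * s / D) ^ 2 / s = 4 * C₂ * s / D ^ 2 := by
      field_simp; ring
    rw [hv] at h1
    have h2 := hpart4 b hb
    have heq2 : C₂ * b ^ 2 / (D * b - s) = 4 * C₂ * s / D ^ 2 :=
      le_antisymm h1 h2
    rw [div_eq_div_iff hgb.ne' (pow_pos hD 2).ne'] at heq2
    have hsq : (D * b - 2 * s) ^ 2 = 0 := by
      have hkey : C₂ * ((D * b - 2 * s) ^ 2) = 0 := by linarith [heq2, (by ring :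
        C₂ * ((D * b - 2 * s) ^ 2) = C₂ * b ^ 2 * D ^ 2 - 4 * C₂ * s * (D * b - s))]
      exact (mul_eq_zero.mp hkey).resolve_left hC₂.ne'
    
    have : D * b - 2 * s = 0 := by
      exact pow_eq_zero_iff (by norm_num) |>.mp hsq
    rw [eq_div_iff hD.ne']
    linarith
end
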